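/- arXiv:1307.8383 — 6 statements merged into one kernel-verified Lean document; each statement's English description precedes it below -/
import Mathlib

section
/- Consider the singular ODE system (x²−ε)·dy/dx = M(ε)·y + f(x,y,ε) for y ∈ ℂ^m, where M is an m×m matrix with entries in ℂ[[ε]] whose constant-term matrix M(0) is invertible, and f = (f₁,…,f_m) is an m-tuple of formal power series in the variables (x, y₁,…,y_m, ε) such that: (i) the part of f of degree 0 in the variables y is divisible by x²−ε in ℂ[[x,ε]]^m, and (ii) for every monomial of degree 1 in y, its coefficient (a series in ℂ[[x,ε]]) has zero constant term. Then there exists a unique u ∈ ℂ[[x,ε]]^m such that ŷ := (x²−ε)·u satisfies (x²−ε)·∂ŷ/∂x = M(ε)·ŷ + f(x, ŷ, ε) as an identity of formal power series in (x,ε); i.e., the system has a unique formal solution of the form ŷ(x,ε) = (x²−ε)·∑_{k,j≥0} y_{kj} x^k ε^j with y_{kj} ∈ ℂ^m. -/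
open MvPowerSeries

/-- Formal substitution of an `m`-tuple `y` of formal power series in `(x, ε)` (each
with zero constant term) for the variables `y₁, …, y_m` in a formal power series `f`
in the variables `(y₁, …, y_m, x, ε)`: the coefficient of a monomial of the result is
the (finite, under the zero-constant-term hypothesis) sum over all monomials `d` of
`f` of the corresponding contribution. Variables: `Sum.inl i` is `yᵢ`, `Sum.inr 0` is
`x`, `Sum.inr 1` is `ε`. -/
noncomputable def substY (m : ℕ) (f : MvPowerSeries (Fin m ⊕ Fin 2) ℂ)
    (y : Fin m → MvPowerSeries (Fin 2) ℂ) : MvPowerSeries (Fin 2) ℂ :=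
  fun e => ∑ᶠ d : (Fin m ⊕ Fin 2) →₀ ℕ,
    MvPowerSeries.coeff d f *
      MvPowerSeries.coeff e
        (MvPowerSeries.X (0 : Fin 2) ^ d (Sum.inr 0) *
          MvPowerSeries.X (1 : Fin 2) ^ d (Sum.inr 1) *
          ∏ i : Fin m, y i ^ d (Sum.inl i))

/-- The formal partial derivative `∂/∂x` on `ℂ[[x, ε]]` (the variable `x` being the
variable `0 : Fin 2`). -/
noncomputable def dX (F : MvPowerSeries (Fin 2) ℂ) : MvPowerSeries (Fin 2) ℂ :=
  fun e => ((e 0 + 1 : ℕ) : ℂ) *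
    MvPowerSeries.coeff (e + Finsupp.single (0 : Fin 2) 1) F

/-- The embedding `ℂ[[ε]] → ℂ[[x, ε]]`. -/
noncomputable def embEps (g : PowerSeries ℂ) : MvPowerSeries (Fin 2) ℂ :=
  fun e => if e 0 = 0 then PowerSeries.coeff (e 1) g else 0


namespace FSEU

abbrev S2 := Fin 2 →₀ ℕ
abbrev Ser := MvPowerSeries (Fin 2) ℂ

/-- the weight `k + 2j` of a monomial `x^k ε^j` -/
def w (e : S2) : ℕ := e 0 + 2 * e 1

noncomputable def P : Ser := MvPowerSeries.X 0 ^ 2 - MvPowerSeries.X 1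

lemma S2ext {a b : S2} (h0 : a 0 = b 0) (h1 : a 1 = b 1) : a = b := by
  ext s; fin_cases s <;> assumption

lemma w_add (a b : S2) : w (a + b) = w a + w b := by
  simp [w, Finsupp.add_apply]; ring

lemma w_eq_zero {a : S2} (h : w a = 0) : a = 0 := by
  have h0 : a 0 = 0 := by simp [w] at h; omega
  have h1 : a 1 = 0 := by simp [w] at h; omega
  exact S2ext (by simpa using h0) (by simpa using h1)

lemma le_iff' {a b : S2} : a ≤ b ↔ a 0 ≤ b 0 ∧ a 1 ≤ b 1 := by
  rw [Finsupp.le_def]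
  constructor
  · intro h; exact ⟨h 0, h 1⟩
  · rintro ⟨h0, h1⟩ s; fin_cases s <;> assumption

lemma w_mono {a b : S2} (h : a ≤ b) : w a ≤ w b := by
  rw [le_iff'] at h; simp [w]; omega

lemma w_lt_of_le_of_ne {a b : S2} (h : a ≤ b) (hne : a ≠ b) : w a < w b := by
  rw [le_iff'] at h
  rcases Nat.lt_or_ge (w a) (w b) with h' | h'
  · exact h'
  · exfalso; apply hne; apply S2ext <;> simp [w] at h' ⊢ <;> omega

lemma coeff_dX (F : Ser) (e : S2) :
    coeff e (dX F) = ((e 0 + 1 : ℕ) : ℂ) * coeff (e + Finsupp.single 0 1) F := rfl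

lemma w_single0 (k : ℕ) : w (Finsupp.single 0 k) = k := by
  simp [w, Finsupp.single_apply]

lemma w_single1 (j : ℕ) : w (Finsupp.single 1 j) = 2 * j := by
  simp [w, Finsupp.single_apply]

end FSEU

namespace FSEU

lemma coeff_X_pow_mul (s : Fin 2) (k : ℕ) (F : Ser) (e : S2) :
    coeff e ((MvPowerSeries.X s ^ k : Ser) * F) =
      if Finsupp.single s k ≤ e then coeff (e - Finsupp.single s k) F else 0 := by
  rw [X_pow_eq, coeff_monomial_mul]
  simp

/-- `F` has `w`-order at least `c`. -/
def OrdGE (c : ℕ) (F : Ser) : Prop := ∀ e : S2, w e < c → coeff e F = 0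

lemma ordGE_mono {c c' : ℕ} {F : Ser} (h : c' ≤ c) (hF : OrdGE c F) : OrdGE c' F :=
  fun e he => hF e (lt_of_lt_of_le he h)

lemma ordGE_mul {a b : ℕ} {F G : Ser} (hF : OrdGE a F) (hG : OrdGE b G) :
    OrdGE (a + b) (F * G) := by
  intro e he
  rw [coeff_mul]
  apply Finset.sum_eq_zero
  rintro ⟨p1, p2⟩ hp
  rw [Finset.HasAntidiagonal.mem_antidiagonal] at hp
  have hw : w p1 + w p2 = w e := by rw [← w_add, hp]
  rcases Nat.lt_or_ge (w p1) a with h1 | h1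
  · simp [hF p1 h1]
  · have : w p2 < b := by omega
    simp [hG p2 this]

lemma ordGE_pow {a : ℕ} {F : Ser} (hF : OrdGE a F) (k : ℕ) : OrdGE (k * a) (F ^ k) := by
  induction k with
  | zero => intro e he; omega
  | succ n ih =>
      rw [pow_succ]
      have := ordGE_mul ih hF
      rwa [show (n+1) * a = n * a + a by ring]

lemma ordGE_X_pow (s : Fin 2) (k : ℕ) : OrdGE (w (Finsupp.single s k)) ((MvPowerSeries.X s : Ser) ^ k) := by
  intro e he
  rw [X_pow_eq, coeff_monomial]
  rw [if_neg]
  rintro rfl; omega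

lemma ordGE_X0_pow (k : ℕ) : OrdGE k ((MvPowerSeries.X 0 : Ser) ^ k) := by
  have := ordGE_X_pow 0 k; rwa [w_single0] at this

lemma ordGE_X1_pow (j : ℕ) : OrdGE (2 * j) ((MvPowerSeries.X 1 : Ser) ^ j) := by
  have := ordGE_X_pow 1 j; rwa [w_single1] at this

lemma ordGE_P : OrdGE 2 P := by
  intro e he
  have h0 := ordGE_X0_pow 2 e he
  have h1 := ordGE_X1_pow 1 e (by omega)
  simp only [P, map_sub]
  rw [h0, pow_one] at *
  rw [show coeff e (MvPowerSeries.X 1 : Ser) = 0 from by simpa using h1]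
  simp [h0]

lemma ordGE_P_pow (k : ℕ) : OrdGE (2 * k) (P ^ k) := by
  have := ordGE_pow ordGE_P k; rwa [Nat.mul_comm] at this

lemma ordGE_one_of_constantCoeff {F : Ser} (h : constantCoeff F = 0) :
    OrdGE 1 F := by
  intro e he
  have : e = 0 := w_eq_zero (by omega)
  subst this
  simpa [← coeff_zero_eq_constantCoeff] using h

lemma ordGE_prod {ι : Type*} (s : Finset ι) (F : ι → Ser) (c : ι → ℕ)
    (h : ∀ i ∈ s, OrdGE (c i) (F i)) :
    OrdGE (∑ i ∈ s, c i) (∏ i ∈ s, F i) := by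
  classical
  induction s using Finset.induction_on with
  | empty => intro e he; simp at he
  | insert x t hx ih =>
      rw [Finset.sum_insert hx, Finset.prod_insert hx]
      exact ordGE_mul (h x (Finset.mem_insert_self _ _))
        (ih fun i hi => h i (Finset.mem_insert_of_mem hi))

/-- `F` and `G` agree on all coefficients of weight `< N`. -/
def Agree (N : ℕ) (F G : Ser) : Prop := ∀ e : S2, w e < N → coeff e F = coeff e G

lemma agree_of_le {N N' : ℕ} {F G : Ser} (h : N' ≤ N) (hFG : Agree N F G) : Agree N' F G :=
  fun e he => hFG e (lt_of_lt_of_le he h)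

lemma agree_refl {N : ℕ} (F : Ser) : Agree N F F := fun _ _ => rfl

lemma agree_mul {N : ℕ} {F F' G G' : Ser} (hF : Agree N F F') (hG : Agree N G G') :
    Agree N (F * G) (F' * G') := by
  intro e he
  rw [coeff_mul, coeff_mul]
  apply Finset.sum_congr rfl
  rintro ⟨p1, p2⟩ hp
  rw [Finset.HasAntidiagonal.mem_antidiagonal] at hp
  have hw : w p1 + w p2 = w e := by rw [← w_add, hp]
  rw [hF p1 (by omega), hG p2 (by omega)]

lemma agree_pow {N : ℕ} {F F' : Ser} (hF : Agree N F F') (k : ℕ) :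
    Agree N (F ^ k) (F' ^ k) := by
  induction k with
  | zero => simpa using agree_refl _
  | succ n ih => rw [pow_succ, pow_succ]; exact agree_mul ih hF

lemma agree_prod {ι : Type*} {N : ℕ} (s : Finset ι) (F F' : ι → Ser)
    (h : ∀ i ∈ s, Agree N (F i) (F' i)) :
    Agree N (∏ i ∈ s, F i) (∏ i ∈ s, F' i) := by
  classical
  induction s using Finset.induction_on with
  | empty => simpa using agree_refl _
  | insert x t hx ih =>
      rw [Finset.prod_insert hx, Finset.prod_insert hx]
      exact agree_mul (h x (Finset.mem_insert_self _ _))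
        (ih fun i hi => h i (Finset.mem_insert_of_mem hi))

lemma agree_mul_left {N c : ℕ} {H G G' : Ser} (hH : OrdGE c H) (hG : Agree N G G') :
    Agree (N + c) (H * G) (H * G') := by
  intro e he
  rw [coeff_mul, coeff_mul]
  apply Finset.sum_congr rfl
  rintro ⟨p1, p2⟩ hp
  rw [Finset.HasAntidiagonal.mem_antidiagonal] at hp
  have hw : w p1 + w p2 = w e := by rw [← w_add, hp]
  rcases Nat.lt_or_ge (w p1) c with h1 | h1
  · rw [hH p1 h1]; ring
  · rw [hG p2 (by omega)]

lemma agree_dX {N : ℕ} {F G : Ser} (h : Agree N F G) : Agree (N - 1) (dX F) (dX G) := by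
  intro e he
  rw [coeff_dX, coeff_dX, h]
  rw [w_add, w_single0]
  omega

end FSEU

namespace FSEU

variable (m : ℕ)

abbrev SY := (Fin m ⊕ Fin 2) →₀ ℕ

/-- total degree in the `y` variables -/
def Dd (d : SY m) : ℕ := ∑ i : Fin m, d (Sum.inl i)

noncomputable def tser (u : Fin m → Ser) (d : SY m) : Ser :=
  MvPowerSeries.X (0 : Fin 2) ^ d (Sum.inr 0) * MvPowerSeries.X (1 : Fin 2) ^ d (Sum.inr 1) *
    ∏ i : Fin m, u i ^ d (Sum.inl i)

noncomputable def gterm (u : Fin m → Ser) (d : SY m) : Ser :=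
  MvPowerSeries.X (0 : Fin 2) ^ d (Sum.inr 0) * MvPowerSeries.X (1 : Fin 2) ^ d (Sum.inr 1) *
    P ^ (Dd m d - 1) * ∏ i : Fin m, u i ^ d (Sum.inl i)

noncomputable def g (f : MvPowerSeries (Fin m ⊕ Fin 2) ℂ) (u : Fin m → Ser) : Ser :=
  fun b => ∑ᶠ d : SY m, if Dd m d = 0 then 0 else coeff d f * coeff b (gterm m u d)

noncomputable def bnd (W : ℕ) : SY m := Finsupp.equivFunOnFinite.symm fun _ => W + 1

lemma substY_apply (f : MvPowerSeries (Fin m ⊕ Fin 2) ℂ) (y : Fin m → Ser) (e : S2) :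
    coeff e (substY m f y) = ∑ᶠ d : SY m, coeff d f * coeff e (tser m y d) := rfl

lemma coeff_g_apply (f : MvPowerSeries (Fin m ⊕ Fin 2) ℂ) (u : Fin m → Ser) (b : S2) :
    coeff b (g m f u) =
      ∑ᶠ d : SY m, if Dd m d = 0 then 0 else coeff d f * coeff b (gterm m u d) := rfl

lemma le_bnd_iff (W : ℕ) (d : SY m) : d ≤ bnd m W ↔ ∀ s, d s ≤ W + 1 := by
  rw [Finsupp.le_def]
  constructor
  · intro h s; simpa [bnd] using h s
  · intro h s; simpa [bnd] using h s

lemma single_le_Dd (d : SY m) (i : Fin m) : d (Sum.inl i) ≤ Dd m d :=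
  Finset.single_le_sum (f := fun i => d (Sum.inl i)) (fun _ _ => Nat.zero_le _)
    (Finset.mem_univ i)

lemma ordGE_tser (u : Fin m → Ser) (hu : ∀ i, constantCoeff (u i) = 0)
    (d : SY m) :
    OrdGE (d (Sum.inr 0) + 2 * d (Sum.inr 1) + Dd m d) (tser m u d) := by
  apply ordGE_mul (ordGE_mul (ordGE_X0_pow _) (ordGE_X1_pow _))
  have : ∀ i ∈ Finset.univ, OrdGE (d (Sum.inl i) * 1) (u i ^ d (Sum.inl i)) :=
    fun i _ => ordGE_pow (ordGE_one_of_constantCoeff (hu i)) _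
  have h := ordGE_prod Finset.univ _ _ this
  simpa [Dd] using h

lemma ordGE_gterm (u : Fin m → Ser) (d : SY m) :
    OrdGE (d (Sum.inr 0) + 2 * d (Sum.inr 1) + 2 * (Dd m d - 1)) (gterm m u d) := by
  have h0 : OrdGE 0 (∏ i : Fin m, u i ^ d (Sum.inl i)) := fun e he => by omega
  have := ordGE_mul (ordGE_mul (ordGE_mul (ordGE_X0_pow (d (Sum.inr 0)))
    (ordGE_X1_pow (d (Sum.inr 1)))) (ordGE_P_pow (Dd m d - 1))) h0
  simpa [gterm] using this

lemma tser_support (f : MvPowerSeries (Fin m ⊕ Fin 2) ℂ) (u : Fin m → Ser)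
    (hu : ∀ i, constantCoeff (u i) = 0) (e : S2) :
    (Function.support fun d : SY m => coeff d f * coeff e (tser m u d)) ⊆
      ↑(Finset.Iic (bnd m (w e))) := by
  intro d hd
  simp only [Function.mem_support] at hd
  have hne : coeff e (tser m u d) ≠ 0 := fun h => hd (by rw [h, mul_zero])
  have hord := ordGE_tser m u hu d
  have hle : d (Sum.inr 0) + 2 * d (Sum.inr 1) + Dd m d ≤ w e := by
    by_contra h
    exact hne (hord e (by omega))
  simp only [Finset.coe_Iic, Set.mem_Iic]
  rw [le_bnd_iff]
  intro s
  rcases s with i | s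
  · have := single_le_Dd m d i; omega
  · fin_cases s <;> simp <;> omega

lemma gterm_support (f : MvPowerSeries (Fin m ⊕ Fin 2) ℂ) (u : Fin m → Ser)
    {W : ℕ} {b : S2} (hb : w b ≤ W) :
    (Function.support fun d : SY m =>
        if Dd m d = 0 then 0 else coeff d f * coeff b (gterm m u d)) ⊆
      ↑(Finset.Iic (bnd m W)) := by
  intro d hd
  simp only [Function.mem_support] at hd
  have hD : Dd m d ≠ 0 := by intro h; simp [h] at hd
  rw [if_neg hD] at hd
  have hne : coeff b (gterm m u d) ≠ 0 := fun h => hd (by rw [h, mul_zero])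
  have hord := ordGE_gterm m u d
  have hle : d (Sum.inr 0) + 2 * d (Sum.inr 1) + 2 * (Dd m d - 1) ≤ w b := by
    by_contra h
    exact hne (hord b (by omega))
  simp only [Finset.coe_Iic, Set.mem_Iic]
  rw [le_bnd_iff]
  intro s
  rcases s with i | s
  · have := single_le_Dd m d i; omega
  · fin_cases s <;> simp <;> omega

lemma substY_eq_sum (f : MvPowerSeries (Fin m ⊕ Fin 2) ℂ) (u : Fin m → Ser)
    (hu : ∀ i, constantCoeff (u i) = 0) (e : S2) :
    coeff e (substY m f u) =
      ∑ d ∈ Finset.Iic (bnd m (w e)), coeff d f * coeff e (tser m u d) := by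
  rw [substY_apply]
  exact finsum_eq_sum_of_support_subset _ (tser_support m f u hu e)

lemma g_eq_sum (f : MvPowerSeries (Fin m ⊕ Fin 2) ℂ) (u : Fin m → Ser)
    {W : ℕ} {b : S2} (hb : w b ≤ W) :
    coeff b (g m f u) =
      ∑ d ∈ Finset.Iic (bnd m W),
        if Dd m d = 0 then 0 else coeff d f * coeff b (gterm m u d) := by
  rw [coeff_g_apply]
  exact finsum_eq_sum_of_support_subset _ (gterm_support m f u hb)

end FSEU

namespace FSEU

variable (m : ℕ)

lemma eq_single_of_Dd_one (d : SY m) (h0 : d (Sum.inr 0) = 0) (h1 : d (Sum.inr 1) = 0)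
    (hD : Dd m d = 1) : ∃ k : Fin m, d = Finsupp.single (Sum.inl k) 1 := by
  have hne : Dd m d ≠ 0 := by omega
  have hne' : ∑ i : Fin m, d (Sum.inl i) ≠ 0 := by simpa [Dd] using hne
  obtain ⟨k, -, hk⟩ := Finset.exists_ne_zero_of_sum_ne_zero hne'
  have hk1 : d (Sum.inl k) = 1 := by
    have := single_le_Dd m d k; omega
  refine ⟨k, ?_⟩
  have hrest : ∀ i : Fin m, i ≠ k → d (Sum.inl i) = 0 := by
    intro i hik
    have hsum : ∑ i ∈ (Finset.univ.erase k), d (Sum.inl i) = 0 := by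
      have htot : (∑ i ∈ (Finset.univ.erase k), d (Sum.inl i)) + d (Sum.inl k) = 1 := by
        rw [Finset.sum_erase_add _ _ (Finset.mem_univ k)]
        simpa [Dd] using hD
      omega
    exact Finset.sum_eq_zero_iff.mp hsum i (Finset.mem_erase.mpr ⟨hik, Finset.mem_univ i⟩)
  ext s
  rcases s with i | s
  · rcases eq_or_ne i k with rfl | hik
    · simp [hk1, Finsupp.single_apply]
    · simp [hrest i hik, Finsupp.single_apply, Sum.inl.injEq, Ne.symm hik]
  · fin_cases s <;> simp [h0, h1, Finsupp.single_apply]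

lemma g_agree (f : MvPowerSeries (Fin m ⊕ Fin 2) ℂ)
    (hf1 : ∀ k : Fin m, coeff (Finsupp.single (Sum.inl k) 1) f = 0)
    {N : ℕ} {u v : Fin m → Ser} (h : ∀ j, Agree N (u j) (v j)) {e : S2} (he : w e ≤ N) :
    coeff e (g m f u) = coeff e (g m f v) := by
  rw [g_eq_sum m f u he, g_eq_sum m f v he]
  apply Finset.sum_congr rfl
  intro d _
  rcases eq_or_ne (Dd m d) 0 with hD | hD
  · simp [hD]
  rw [if_neg hD, if_neg hD]
  by_cases hc : d (Sum.inr 0) = 0 ∧ d (Sum.inr 1) = 0 ∧ Dd m d = 1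
  · obtain ⟨k, rfl⟩ := eq_single_of_Dd_one m d hc.1 hc.2.1 hc.2.2
    rw [hf1 k, zero_mul, zero_mul]
  · -- the "head" has positive order
    have hcpos : 1 ≤ d (Sum.inr 0) + 2 * d (Sum.inr 1) + 2 * (Dd m d - 1) := by
      by_contra hcon
      exact hc ⟨by omega, by omega, by omega⟩
    have hH : OrdGE (d (Sum.inr 0) + 2 * d (Sum.inr 1) + 2 * (Dd m d - 1))
        (MvPowerSeries.X (0 : Fin 2) ^ d (Sum.inr 0) * MvPowerSeries.X (1 : Fin 2) ^ d (Sum.inr 1) *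
          P ^ (Dd m d - 1)) := by
      have := ordGE_mul (ordGE_mul (ordGE_X0_pow (d (Sum.inr 0)))
        (ordGE_X1_pow (d (Sum.inr 1)))) (ordGE_P_pow (Dd m d - 1))
      exact this
    have hG : Agree N (∏ i : Fin m, u i ^ d (Sum.inl i)) (∏ i : Fin m, v i ^ d (Sum.inl i)) :=
      agree_prod _ _ _ fun i _ => agree_pow (h i) _
    have := agree_mul_left hH hG
    simp only [gterm]
    rw [this e (by omega)]

end FSEU

namespace FSEU

variable (m : ℕ)

lemma cc_P : constantCoeff P = 0 := by
  simp [P]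

lemma tser_of_Dd_zero (y : Fin m → Ser) (d : SY m) (hD : Dd m d = 0) :
    tser m y d =
      MvPowerSeries.X (0 : Fin 2) ^ d (Sum.inr 0) * MvPowerSeries.X (1 : Fin 2) ^ d (Sum.inr 1) := by
  have hall : ∀ i : Fin m, d (Sum.inl i) = 0 := by
    intro i
    have := single_le_Dd m d i; omega
  unfold tser
  rw [Finset.prod_eq_one (fun i _ => by rw [hall i, pow_zero]), mul_one]

lemma tser_zero_of_Dd_ne (d : SY m) (hD : Dd m d ≠ 0) :
    tser m (fun _ => (0 : Ser)) d = 0 := by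
  have : ∃ i : Fin m, d (Sum.inl i) ≠ 0 := by
    by_contra h
    push_neg at h
    exact hD (Finset.sum_eq_zero fun i _ => h i)
  obtain ⟨i, hi⟩ := this
  unfold tser
  rw [Finset.prod_eq_zero (Finset.mem_univ i) (zero_pow hi), mul_zero]

lemma tser_Pu (u : Fin m → Ser) (d : SY m) (hD : Dd m d ≠ 0) :
    tser m (fun j => P * u j) d = P * gterm m u d := by
  unfold tser gterm
  have h1 : ∏ i : Fin m, (P * u i) ^ d (Sum.inl i) =
      P ^ Dd m d * ∏ i : Fin m, u i ^ d (Sum.inl i) := by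
    simp only [Dd]
    rw [← Finset.prod_pow_eq_pow_sum, ← Finset.prod_mul_distrib]
    exact Finset.prod_congr rfl fun i _ => (mul_pow _ _ _)
  rw [h1, show P ^ Dd m d = P ^ (Dd m d - 1) * P by
    rw [← pow_succ]; congr 1; omega]
  ring

lemma substY_split (f : MvPowerSeries (Fin m ⊕ Fin 2) ℂ) (u : Fin m → Ser) :
    substY m f (fun j => P * u j) =
      substY m f (fun _ => 0) + P * g m f u := by
  apply MvPowerSeries.ext; intro e
  have hu : ∀ i, constantCoeff ((fun j => P * u j) i) = 0 := by
    intro i; simp [cc_P]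
  have h0 : ∀ i : Fin m, constantCoeff ((fun _ : Fin m => (0 : Ser)) i) = 0 := by
    intro i; simp
  rw [map_add, substY_eq_sum m f _ hu e, substY_eq_sum m f _ h0 e, coeff_mul]
  have key : ∀ p ∈ Finset.HasAntidiagonal.antidiagonal e,
      coeff p.1 P * coeff p.2 (g m f u) =
        ∑ d ∈ Finset.Iic (bnd m (w e)),
          (if Dd m d = 0 then 0
            else coeff p.1 P * (coeff d f * coeff p.2 (gterm m u d))) := by
    intro p hp
    rw [Finset.HasAntidiagonal.mem_antidiagonal] at hp
    have hwp : w p.2 ≤ w e := by rw [← hp, w_add]; omega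
    rw [g_eq_sum m f u hwp, Finset.mul_sum]
    apply Finset.sum_congr rfl; intro d _
    rcases eq_or_ne (Dd m d) 0 with h | h <;> simp [h]
  rw [Finset.sum_congr rfl key, Finset.sum_comm, ← Finset.sum_add_distrib]
  apply Finset.sum_congr rfl
  intro d _
  rcases eq_or_ne (Dd m d) 0 with h | h
  · simp only [h, if_pos, Finset.sum_const_zero, add_zero]
    rw [tser_of_Dd_zero m _ d h, tser_of_Dd_zero m _ d h]
  · rw [tser_zero_of_Dd_ne m d h, map_zero, mul_zero, zero_add]
    simp only [if_neg h]
    have : ∑ p ∈ Finset.HasAntidiagonal.antidiagonal e,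
        coeff p.1 P * (coeff d f * coeff p.2 (gterm m u d)) =
        coeff d f * ∑ p ∈ Finset.HasAntidiagonal.antidiagonal e,
          coeff p.1 P * coeff p.2 (gterm m u d) := by
      rw [Finset.mul_sum]
      apply Finset.sum_congr rfl; intro p _; ring
    rw [this, ← coeff_mul, ← tser_Pu m u d h]

end FSEU

namespace FSEU

lemma coeff_X_mul' (s : Fin 2) (F : Ser) (e : S2) :
    coeff e ((MvPowerSeries.X s : Ser) * F) =
      if Finsupp.single s 1 ≤ e then coeff (e - Finsupp.single s 1) F else 0 := by
  rw [← pow_one (MvPowerSeries.X s : Ser), coeff_X_pow_mul]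

lemma dX_P_mul (F : Ser) :
    dX (P * F) = MvPowerSeries.X 0 * F + MvPowerSeries.X 0 * F + P * dX F := by
  apply MvPowerSeries.ext; intro e
  rw [map_add, map_add, coeff_dX]
  simp only [P, sub_mul, map_sub]
  rw [coeff_X_pow_mul, coeff_X_mul', coeff_X_mul', coeff_X_pow_mul, coeff_X_mul']
  simp only [coeff_dX]
  simp only [Finsupp.single_le_iff, Finsupp.add_apply, Finsupp.single_apply, Finsupp.tsub_apply]
  norm_num
  have hB : (e + Finsupp.single 0 1) - Finsupp.single 1 1
      = (e - Finsupp.single 1 1) + Finsupp.single (0 : Fin 2) 1 := by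
    apply S2ext <;> simp [Finsupp.single_apply]
  have hA : (e + Finsupp.single 0 1) - Finsupp.single 0 2 = e - Finsupp.single (0 : Fin 2) 1 := by
    apply S2ext <;> simp [Finsupp.single_apply]
  rw [hB, hA]
  by_cases h2 : 2 ≤ e 0
  · have h0 : 1 ≤ e 0 := by omega
    have hD : (e - Finsupp.single 0 2) + Finsupp.single 0 1 = e - Finsupp.single (0 : Fin 2) 1 := by
      apply S2ext <;> simp [Finsupp.single_apply] <;> omega
    rw [hD]
    simp only [if_pos h0, if_pos h2, if_pos (show 2 ≤ e 0 + 1 by omega)]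
    rw [Nat.cast_sub h2]
    split_ifs <;> first | omega | (push_cast; ring)
  · by_cases h0 : 1 ≤ e 0
    · have he0 : e 0 = 1 := by omega
      simp only [if_pos h0, if_pos (show 2 ≤ e 0 + 1 by omega), if_neg h2, he0]
      split_ifs <;> first | omega | (push_cast; ring)
    · simp only [if_neg h0, if_neg h2, if_neg (show ¬ 2 ≤ e 0 + 1 by omega)]
      split_ifs <;> first | omega | (push_cast; ring)

end FSEU

namespace FSEU

lemma coeff_embEps_zero (G : PowerSeries ℂ) :
    coeff (0 : S2) (embEps G) = PowerSeries.constantCoeff G := by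
  show (if (0 : S2) 0 = 0 then PowerSeries.coeff ((0 : S2) 1) G else 0) = _
  simp [PowerSeries.coeff_zero_eq_constantCoeff]

lemma coeff_embEps_mul_sub (G : PowerSeries ℂ) {u v : Ser} {e : S2}
    (h : Agree (w e) u v) :
    coeff e (embEps G * u) - PowerSeries.constantCoeff G * coeff e u =
      coeff e (embEps G * v) - PowerSeries.constantCoeff G * coeff e v := by
  classical
  rw [coeff_mul, coeff_mul]
  have hmem : ((0 : S2), e) ∈ Finset.HasAntidiagonal.antidiagonal e := by
    rw [Finset.HasAntidiagonal.mem_antidiagonal]; simp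
  rw [← Finset.add_sum_erase _ _ hmem, ← Finset.add_sum_erase _ _ hmem]
  have hrest : ∀ p ∈ (Finset.HasAntidiagonal.antidiagonal e).erase ((0 : S2), e),
      coeff p.1 (embEps G) * coeff p.2 u = coeff p.1 (embEps G) * coeff p.2 v := by
    rintro ⟨p1, p2⟩ hp
    rw [Finset.mem_erase, Finset.HasAntidiagonal.mem_antidiagonal] at hp
    have hne : p2 ≠ e := by
      rintro rfl
      exact hp.1 (by simpa using (add_right_cancel (a := p1) (b := (0:S2)) (by simpa using hp.2)).symm ▸ rfl)
    have hle : p2 ≤ e := by rw [← hp.2]; exact le_add_self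
    rw [h p2 (w_lt_of_le_of_ne hle hne)]
  rw [Finset.sum_congr rfl hrest, coeff_embEps_zero]
  ring

noncomputable def Am (m : ℕ) (M : Fin m → Fin m → PowerSeries ℂ) : Matrix (Fin m) (Fin m) ℂ :=
  Matrix.of fun i j => PowerSeries.constantCoeff (M i j)

noncomputable def Phi (m : ℕ) (M : Fin m → Fin m → PowerSeries ℂ)
    (f : Fin m → MvPowerSeries (Fin m ⊕ Fin 2) ℂ) (q : Fin m → Ser)
    (e : S2) (u : Fin m → Ser) : Fin m → ℂ := fun i =>
  (coeff e (MvPowerSeries.X 0 * u i) + coeff e (MvPowerSeries.X 0 * u i)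
      + coeff e (P * dX (u i)))
    - coeff e (q i) - coeff e (g m (f i) u)
    - coeff e (∑ j, embEps (M i j) * u j)
    + ∑ j, Am m M i j * coeff e (u j)

lemma ordGE_X0 : OrdGE 1 (MvPowerSeries.X 0 : Ser) := by
  have := ordGE_X0_pow 1; rwa [pow_one] at this

lemma Phi_agree (m : ℕ) (M : Fin m → Fin m → PowerSeries ℂ)
    (f : Fin m → MvPowerSeries (Fin m ⊕ Fin 2) ℂ) (q : Fin m → Ser)
    (hf1 : ∀ i, ∀ k : Fin m,
      MvPowerSeries.coeff (Finsupp.single (Sum.inl k : Fin m ⊕ Fin 2) 1) (f i) = 0)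
    {e : S2} {u v : Fin m → Ser} (h : ∀ j, Agree (w e) (u j) (v j)) :
    Phi m M f q e u = Phi m M f q e v := by
  funext i
  unfold Phi
  have h1 : coeff e (MvPowerSeries.X 0 * u i) = coeff e (MvPowerSeries.X 0 * v i) :=
    (agree_mul_left ordGE_X0 (h i)) e (by omega)
  have h2 : coeff e (P * dX (u i)) = coeff e (P * dX (v i)) :=
    (agree_mul_left ordGE_P (agree_dX (h i))) e (by omega)
  have h3 := g_agree m (f i) (hf1 i) h (le_refl (w e))
  rw [h1, h2, h3, map_sum, map_sum]
  have hs : (∑ j, coeff e (embEps (M i j) * u j)) - ∑ j, Am m M i j * coeff e (u j) =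
      (∑ j, coeff e (embEps (M i j) * v j)) - ∑ j, Am m M i j * coeff e (v j) := by
    rw [← Finset.sum_sub_distrib, ← Finset.sum_sub_distrib]
    exact Finset.sum_congr rfl fun j _ => coeff_embEps_mul_sub (M i j) (h j)
  linear_combination -hs

noncomputable def wfF (m : ℕ) (Psi : S2 → (Fin m → Ser) → (Fin m → ℂ)) : S2 → Fin m → ℂ
  | e => Psi e fun j e' => if h : w e' < w e then wfF m Psi e' j else 0
termination_by e => w e
decreasing_by exact h

noncomputable def wfFser (m : ℕ) (Psi : S2 → (Fin m → Ser) → (Fin m → ℂ)) : Fin m → Ser :=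
  fun j e => wfF m Psi e j

lemma coeff_wfFser (m : ℕ) (Psi : S2 → (Fin m → Ser) → (Fin m → ℂ)) (j : Fin m) (e : S2) :
    coeff e (wfFser m Psi j) = wfF m Psi e j := rfl

lemma wfF_fix (m : ℕ) (Psi : S2 → (Fin m → Ser) → (Fin m → ℂ))
    (HPsi : ∀ (e : S2) (u v : Fin m → Ser), (∀ j, Agree (w e) (u j) (v j)) →
      Psi e u = Psi e v) (e : S2) :
    wfF m Psi e = Psi e (wfFser m Psi) := by
  rw [wfF]
  apply HPsi
  intro j e' he'
  rw [coeff_wfFser]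
  show (if h : w e' < w e then wfF m Psi e' j else 0) = wfF m Psi e' j
  rw [dif_pos he']

lemma existsUnique_fix (m : ℕ) (Psi : S2 → (Fin m → Ser) → (Fin m → ℂ))
    (HPsi : ∀ (e : S2) (u v : Fin m → Ser), (∀ j, Agree (w e) (u j) (v j)) →
      Psi e u = Psi e v) :
    ∃! u : Fin m → Ser, ∀ e : S2, (fun j => coeff e (u j)) = Psi e u := by
  refine ⟨wfFser m Psi, ?_, ?_⟩
  · intro e
    funext j
    rw [coeff_wfFser]
    exact congrFun (wfF_fix m Psi HPsi e) j
  · intro v hv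
    have H : ∀ n : ℕ, ∀ e : S2, w e = n → ∀ j, coeff e (v j) = wfF m Psi e j := by
      intro n
      induction n using Nat.strong_induction_on with
      | _ n ih =>
        intro e he j
        have hagree : ∀ j, Agree (w e) (v j) (wfFser m Psi j) := by
          intro j' e' he'
          rw [coeff_wfFser]
          exact ih (w e') (he ▸ he') e' rfl j'
        calc coeff e (v j) = Psi e v j := congrFun (hv e) j
          _ = Psi e (wfFser m Psi) j := by rw [HPsi e v (wfFser m Psi) hagree]
          _ = wfF m Psi e j := (congrFun (wfF_fix m Psi HPsi e) j).symm
    funext j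
    apply MvPowerSeries.ext
    intro e
    exact H (w e) e rfl j

end FSEU

namespace FSEU

lemma P_ne_zero : (P : Ser) ≠ 0 := by
  intro h
  have h2 := congrArg (coeff (Finsupp.single 1 1)) h
  rw [map_zero] at h2
  rw [P, map_sub, X_pow_eq, coeff_monomial, coeff_X] at h2
  rw [if_neg (by
    rw [Finsupp.single_eq_single_iff]
    rintro (⟨h', -⟩ | ⟨-, h'⟩) <;> simp at h'), if_pos rfl] at h2
  simp at h2

lemma mulVec_iff {m : ℕ} (A : Matrix (Fin m) (Fin m) ℂ) (hA : IsUnit A)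
    (x y : Fin m → ℂ) : A.mulVec x = y ↔ x = A⁻¹.mulVec y := by
  have hdet := A.isUnit_iff_isUnit_det.mp hA
  constructor
  · rintro rfl
    rw [Matrix.mulVec_mulVec, Matrix.nonsing_inv_mul A hdet, Matrix.one_mulVec]
  · rintro rfl
    rw [Matrix.mulVec_mulVec, Matrix.mul_nonsing_inv A hdet, Matrix.one_mulVec]

end FSEU

open FSEU in
/-- Proposition 2.2 of the paper. The singular system
`(x²−ε)·dy/dx = M(ε)y + f(x,y,ε)`, with `M(0)` invertible,
`f(x,0,ε)` divisible by `x²−ε`, and the coefficients of the monomials of degree `1` in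
`y` having zero constant term, possesses a unique formal power series solution of the
form `ŷ(x,ε) = (x²−ε)·u(x,ε)`, `u ∈ ℂ[[x,ε]]^m`. -/
theorem formal_solution_exists_unique
    (m : ℕ)
    (M : Fin m → Fin m → PowerSeries ℂ)
    (hM : IsUnit (Matrix.of fun i j => PowerSeries.constantCoeff (M i j)))
    (f : Fin m → MvPowerSeries (Fin m ⊕ Fin 2) ℂ)
    -- (i) the part of f of degree 0 in y is divisible by x² − ε
    (hf0 : ∀ i, ∃ q : MvPowerSeries (Fin 2) ℂ,
      substY m (f i) (fun _ => 0) =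
        (MvPowerSeries.X (0 : Fin 2) ^ 2 - MvPowerSeries.X 1) * q)
    -- (ii) the coefficient of each monomial of degree 1 in y has zero constant term
    (hf1 : ∀ i, ∀ k : Fin m,
      MvPowerSeries.coeff (Finsupp.single (Sum.inl k : Fin m ⊕ Fin 2) 1) (f i) = 0) :
    ∃! u : Fin m → MvPowerSeries (Fin 2) ℂ,
      ∀ i,
        (MvPowerSeries.X (0 : Fin 2) ^ 2 - MvPowerSeries.X 1) *
            dX ((MvPowerSeries.X (0 : Fin 2) ^ 2 - MvPowerSeries.X 1) * u i) =
          (∑ j, embEps (M i j) *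
            ((MvPowerSeries.X (0 : Fin 2) ^ 2 - MvPowerSeries.X 1) * u j)) +
            substY m (f i)
              (fun j => (MvPowerSeries.X (0 : Fin 2) ^ 2 - MvPowerSeries.X 1) * u j) := by
  classical
  choose q hq using hf0
  have hMA : IsUnit (Am m M) := hM
  set Psi : S2 → (Fin m → Ser) → (Fin m → ℂ) :=
    fun e u => (Am m M)⁻¹.mulVec (Phi m M f q e u) with hPsi
  have HPsi : ∀ (e : S2) (u v : Fin m → Ser), (∀ j, Agree (w e) (u j) (v j)) →
      Psi e u = Psi e v := by
    intro e u v h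
    simp only [hPsi]
    rw [Phi_agree m M f q hf1 h]
  have key := existsUnique_fix m Psi HPsi
  have equiv : ∀ u : Fin m → MvPowerSeries (Fin 2) ℂ,
      (∀ i,
        (MvPowerSeries.X (0 : Fin 2) ^ 2 - MvPowerSeries.X 1) *
            dX ((MvPowerSeries.X (0 : Fin 2) ^ 2 - MvPowerSeries.X 1) * u i) =
          (∑ j, embEps (M i j) *
            ((MvPowerSeries.X (0 : Fin 2) ^ 2 - MvPowerSeries.X 1) * u j)) +
            substY m (f i)
              (fun j => (MvPowerSeries.X (0 : Fin 2) ^ 2 - MvPowerSeries.X 1) * u j))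
      ↔ (∀ e : S2, (fun j => coeff e (u j)) = Psi e u) := by
    intro u
    have hbig : ∀ i,
        ((MvPowerSeries.X (0 : Fin 2) ^ 2 - MvPowerSeries.X 1) *
            dX ((MvPowerSeries.X (0 : Fin 2) ^ 2 - MvPowerSeries.X 1) * u i) =
          (∑ j, embEps (M i j) *
            ((MvPowerSeries.X (0 : Fin 2) ^ 2 - MvPowerSeries.X 1) * u j)) +
            substY m (f i)
              (fun j => (MvPowerSeries.X (0 : Fin 2) ^ 2 - MvPowerSeries.X 1) * u j))
        ↔ (MvPowerSeries.X 0 * u i + MvPowerSeries.X 0 * u i + P * dX (u i) =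
            (∑ j, embEps (M i j) * u j) + q i + g m (f i) u) := by
      intro i
      have lhsEq : P * dX (P * u i) =
          P * (MvPowerSeries.X 0 * u i + MvPowerSeries.X 0 * u i + P * dX (u i)) := by
        rw [dX_P_mul]
      have rhsEq : (∑ j, embEps (M i j) * (P * u j)) +
            substY m (f i) (fun j => P * u j)
          = P * ((∑ j, embEps (M i j) * u j) + q i + g m (f i) u) := by
        rw [substY_split m (f i) u, hq i]
        have : (∑ j, embEps (M i j) * (P * u j)) = P * ∑ j, embEps (M i j) * u j := by
          rw [Finset.mul_sum]
          exact Finset.sum_congr rfl fun j _ => by ring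
        rw [this]
        show P * _ + (P * q i + P * g m (f i) u) = _
        ring
      show P * dX (P * u i) = (∑ j, embEps (M i j) * (P * u j)) +
            substY m (f i) (fun j => P * u j) ↔ _
      rw [lhsEq, rhsEq]
      exact ⟨fun h => mul_left_cancel₀ P_ne_zero h, fun h => by rw [h]⟩
    rw [forall_congr' hbig]
    constructor
    · intro h e
      rw [hPsi]
      rw [← mulVec_iff _ hMA]
      funext i
      have hcoeff := congrArg (coeff e) (h i)
      simp only [map_add] at hcoeff
      simp only [Matrix.mulVec, dotProduct, Phi]
      linear_combination -hcoeff
    · intro h i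
      apply MvPowerSeries.ext; intro e
      have he := h e
      rw [← mulVec_iff _ hMA] at he
      have hce := congrFun he i
      simp only [Matrix.mulVec, dotProduct, Phi] at hce
      simp only [map_add]
      linear_combination -hce
  obtain ⟨u0, hu0, huniq⟩ := key
  exact ⟨u0, (equiv u0).mpr hu0, fun v hv => huniq v ((equiv v).mp hv)⟩
end

section
/- Let Ω ⊆ ℂ be open, ε ∈ ℂ, and let Λ, R, U, T_D : Ω → M_n(ℂ) be holomorphic matrix-valued functions such that Λ(x) and T_D(x) are diagonal for every x ∈ Ω, U solves the matrix Riccati system (x²−ε)·U′(x) = Λ(x)U(x) − U(x)Λ(x) + (x²−ε)·( R(x)(I+U(x)) − (I+U(x))D(x) ), where D(x) denotes the diagonal part of R(x)(I+U(x)), and T_D solves T_D′(x) = D(x)·T_D(x). Then the matrix function T := (I+U)·T_D solves the linear equation (x²−ε)·T′(x) = A(x)·T(x) − T(x)·Λ(x), where A(x) := Λ(x) + (x²−ε)·R(x). (This is the reduction by which the normalization equation for a non-resonant linear system unfolding an irregular singularity of Poincaré rank 1 is reduced to a system of n(n−1) Riccati equations.) -/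
open Complex Matrix

/-- Reduction of the normalization equation for a non-resonant linear
system unfolding an irregular singularity of Poincaré rank 1 to a system of Riccati
equations: if `U` solves the matrix Riccati system and `T_D` solves `T_D' = D T_D`,
then `T = (I + U) T_D` solves `(x² − ε) T' = A T − T Λ` with `A = Λ + (x² − ε) R`. -/
theorem riccati_reduction_of_normalization
    (n : ℕ) (Ω : Set ℂ) (hΩ : IsOpen Ω) (ε : ℂ)
    (Λ R U U' TD : ℂ → Matrix (Fin n) (Fin n) ℂ)
    -- holomorphy of all data, entrywise
    (hΛhol : ∀ i j, DifferentiableOn ℂ (fun z => Λ z i j) Ω)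
    (hRhol : ∀ i j, DifferentiableOn ℂ (fun z => R z i j) Ω)
    (hUhol : ∀ i j, DifferentiableOn ℂ (fun z => U z i j) Ω)
    (hTDhol : ∀ i j, DifferentiableOn ℂ (fun z => TD z i j) Ω)
    -- Λ(x) and T_D(x) are diagonal
    (hΛdiag : ∀ x ∈ Ω, ∀ i j, i ≠ j → Λ x i j = 0)
    (hTDdiag : ∀ x ∈ Ω, ∀ i j, i ≠ j → TD x i j = 0)
    -- U' is the derivative of U on Ω
    (hU' : ∀ x ∈ Ω, ∀ i j, HasDerivAt (fun z => U z i j) (U' x i j) x)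
    -- U solves the Riccati system, where D is the diagonal part of R (I + U)
    (hRic : ∀ x ∈ Ω,
      (x ^ 2 - ε) • U' x =
        Λ x * U x - U x * Λ x +
          (x ^ 2 - ε) •
            (R x * (1 + U x) -
              (1 + U x) * Matrix.diagonal (fun i => (R x * (1 + U x)) i i)))
    -- T_D solves T_D' = D · T_D
    (hTD' : ∀ x ∈ Ω, ∀ i j,
      HasDerivAt (fun z => TD z i j)
        ((Matrix.diagonal (fun k => (R x * (1 + U x)) k k) * TD x) i j) x) :
    ∀ x ∈ Ω, ∃ T' : Matrix (Fin n) (Fin n) ℂ,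
      (∀ i j, HasDerivAt (fun z => ((1 + U z) * TD z) i j) (T' i j) x) ∧
      (x ^ 2 - ε) • T' =
        (Λ x + (x ^ 2 - ε) • R x) * ((1 + U x) * TD x) -
          ((1 + U x) * TD x) * Λ x := by
  intro x hx
  set D := Matrix.diagonal (fun k => (R x * (1 + U x)) k k) with hD
  refine ⟨U' x * TD x + (1 + U x) * (D * TD x), ?_, ?_⟩
  · intro i j
    have h1 : HasDerivAt (fun z => ∑ k, (1 + U z) i k * TD z k j)
        (∑ k, (U' x i k * TD x k j + (1 + U x) i k * (D * TD x) k j)) x := by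
      apply HasDerivAt.fun_sum
      intro k _
      have hf : HasDerivAt (fun z => (1 + U z) i k) (U' x i k) x := by
        simpa [Matrix.add_apply] using
          (hU' x hx i k).const_add ((1 : Matrix (Fin n) (Fin n) ℂ) i k)
      exact hf.mul (hTD' x hx k j)
    simpa only [Matrix.mul_apply, Matrix.add_apply, Finset.sum_add_distrib] using h1
  · have hΛe : Λ x = Matrix.diagonal (fun i => Λ x i i) := by
      ext i j
      by_cases h : i = j
      · subst h; simp
      · simp [Matrix.diagonal_apply_ne _ h, hΛdiag x hx i j h]
    have hTDe : TD x = Matrix.diagonal (fun i => TD x i i) := by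
      ext i j
      by_cases h : i = j
      · subst h; simp
      · simp [Matrix.diagonal_apply_ne _ h, hTDdiag x hx i j h]
    have hcomm : Λ x * TD x = TD x * Λ x := by
      rw [hΛe, hTDe, Matrix.diagonal_mul_diagonal, Matrix.diagonal_mul_diagonal]
      simp [mul_comm]
    have hr := hRic x hx
    have key : ((x ^ 2 - ε) • U' x) * TD x =
        (Λ x * U x - U x * Λ x) * TD x +
          (x ^ 2 - ε) • ((R x * (1 + U x)) * TD x - ((1 + U x) * D) * TD x) := by
      rw [hr, add_mul, smul_mul_assoc, sub_mul, hD, sub_mul]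
    rw [smul_add, ← smul_mul_assoc, key]
    simp only [add_mul, sub_mul, mul_add, mul_sub, one_mul, mul_one, smul_mul_assoc,
      smul_sub, smul_add, mul_assoc]
    rw [hcomm]
    abel
end

section
/- Let α ∈ ℝ, let A, B ∈ ℂ with Re(e^{iα}A) < Re(e^{iα}B), and let φ be a measurable function on e^{iα}ℝ with |φ|_α^{A,B} < +∞. Then for every t in the open strip T_α^{A,B} the Laplace integral L_α[φ](t) converges absolutely, L_α[φ] is holomorphic on T_α^{A,B}, and for all A₁, B₁ with Re(e^{iα}A) < Re(e^{iα}A₁) ≤ Re(e^{iα}B₁) < Re(e^{iα}B), L_α[φ](t) → 0 as |t| → ∞ uniformly for t in the closed substrip T̄_α^{A₁,B₁}. -/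
open MeasureTheory Set Filter Topology

namespace LapAux

lemma norm_cexp_aux (α : ℝ) (z : ℂ) (s : ℝ) :
    ‖Complex.exp (-z * (Complex.exp (α * Complex.I) * s))‖
      = Real.exp (-(Complex.exp (α * Complex.I) * z).re * s) := by
  rw [Complex.norm_exp]
  congr 1
  have h : -z * (Complex.exp (α * Complex.I) * s)
      = (-(Complex.exp (α * Complex.I) * z)) * (s : ℂ) := by ring
  rw [h]
  simp [Complex.mul_re]
  ring

lemma bound_aux {p a b x M : ℝ} (s : ℝ) (hp : 0 ≤ p)
    (hM : p * (Real.exp (-a * s) + Real.exp (-b * s)) ≤ M)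
    (hax : a ≤ x) (hxb : x ≤ b) :
    p * Real.exp (-x * s) ≤ M * Real.exp (-min (x - a) (b - x) * |s|) := by
  rcases le_total 0 s with hs | hs
  · have h1 : p * Real.exp (-a * s) ≤ M := by
      nlinarith [Real.exp_pos (-b * s), Real.exp_pos (-a * s)]
    have h2 : Real.exp (-x * s) = Real.exp ((a - x) * s) * Real.exp (-a * s) := by
      rw [← Real.exp_add]; ring_nf
    have h3 : (a - x) * s ≤ -min (x - a) (b - x) * |s| := by
      rw [_root_.abs_of_nonneg hs]
      have := min_le_left (x - a) (b - x)
      nlinarith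
    calc p * Real.exp (-x * s) = Real.exp ((a - x) * s) * (p * Real.exp (-a * s)) := by
          rw [h2]; ring
      _ ≤ Real.exp (-min (x - a) (b - x) * |s|) * M :=
          mul_le_mul (Real.exp_le_exp.2 h3) h1 (by positivity) (Real.exp_pos _).le
      _ = M * Real.exp (-min (x - a) (b - x) * |s|) := by ring
  · have h1 : p * Real.exp (-b * s) ≤ M := by
      nlinarith [Real.exp_pos (-b * s), Real.exp_pos (-a * s)]
    have h2 : Real.exp (-x * s) = Real.exp ((b - x) * s) * Real.exp (-b * s) := by
      rw [← Real.exp_add]; ring_nf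
    have h3 : (b - x) * s ≤ -min (x - a) (b - x) * |s| := by
      rw [abs_of_nonpos hs]
      have := min_le_right (x - a) (b - x)
      nlinarith
    calc p * Real.exp (-x * s) = Real.exp ((b - x) * s) * (p * Real.exp (-b * s)) := by
          rw [h2]; ring
      _ ≤ Real.exp (-min (x - a) (b - x) * |s|) * M :=
          mul_le_mul (Real.exp_le_exp.2 h3) h1 (by positivity) (Real.exp_pos _).le
      _ = M * Real.exp (-min (x - a) (b - x) * |s|) := by ring

lemma integrable_exp_abs {c : ℝ} (hc : 0 < c) :
    Integrable (fun s : ℝ => Real.exp (-c * |s|)) := by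
  have h1 : IntegrableOn (fun s : ℝ => Real.exp (-c * |s|)) (Ioi 0) := by
    refine ((exp_neg_integrableOn_Ioi 0 hc)).congr_fun ?_ measurableSet_Ioi
    intro x hx
    simp only [_root_.abs_of_pos (mem_Ioi.1 hx)]
  have h1' : IntegrableOn (fun s : ℝ => Real.exp (-c * |s|)) (Ici 0) := by
    rwa [integrableOn_Ici_iff_integrableOn_Ioi]
  have h2 : IntegrableOn (fun s : ℝ => Real.exp (-c * |s|)) (Iic 0) := by
    have hemb : MeasurableEmbedding (fun x : ℝ => -x) :=
      (Homeomorph.neg ℝ).measurableEmbedding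
    have := (MeasureTheory.Measure.measurePreserving_neg
      (volume : Measure ℝ)).integrableOn_comp_preimage hemb (s := Ici (0:ℝ))
      (f := fun s : ℝ => Real.exp (-c * |s|))
    have hpre : (fun x : ℝ => -x) ⁻¹' Ici (0:ℝ) = Iic 0 := by
      ext x; simp
    rw [hpre] at this
    have : IntegrableOn ((fun s : ℝ => Real.exp (-c * |s|)) ∘ (fun x : ℝ => -x)) (Iic 0)
        ↔ IntegrableOn (fun s : ℝ => Real.exp (-c * |s|)) (Ici 0) := this
    refine (this.2 h1').congr_fun ?_ measurableSet_Iic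
    intro x _
    simp only [Function.comp, abs_neg]
  have : IntegrableOn (fun s : ℝ => Real.exp (-c * |s|)) (Iic 0 ∪ Ioi 0) := h2.union h1
  rwa [Iic_union_Ioi, integrableOn_univ] at this

lemma integrable_abs_mul_exp_abs {c : ℝ} (hc : 0 < c) :
    Integrable (fun s : ℝ => |s| * Real.exp (-c * |s|)) := by
  refine ((integrable_exp_abs (half_pos hc)).const_mul (2 / c)).mono' ?_ ?_
  · exact (_root_.continuous_abs.mul ((continuous_const.mul _root_.continuous_abs).rexp)).aestronglyMeasurable
  · filter_upwards with s
    rw [Real.norm_eq_abs, _root_.abs_of_nonneg (by positivity)]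
    have h1 : |s| ≤ 2 / c * Real.exp (c / 2 * |s|) := by
      have h2 : c / 2 * |s| ≤ Real.exp (c / 2 * |s|) :=
        le_trans (by linarith [Real.add_one_le_exp (c / 2 * |s|)]) le_rfl
      calc |s| = 2 / c * (c / 2 * |s|) := by field_simp
        _ ≤ 2 / c * Real.exp (c / 2 * |s|) := by
            exact mul_le_mul_of_nonneg_left h2 (by positivity)
    calc |s| * Real.exp (-c * |s|) ≤ 2 / c * Real.exp (c / 2 * |s|) * Real.exp (-c * |s|) :=
          mul_le_mul_of_nonneg_right h1 (Real.exp_pos _).le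
      _ = 2 / c * Real.exp (-(c / 2) * |s|) := by
          rw [mul_assoc, ← Real.exp_add]; ring_nf

lemma exists_rho {g : ℝ → ℂ} (hg : Tendsto g (cocompact ℝ) (𝓝 0)) {δ : ℝ} (hδ : 0 < δ) :
    ∃ ρ : ℝ, ∀ y : ℝ, ρ ≤ |y| → ‖g y‖ ≤ δ := by
  have h : ∀ᶠ y in cocompact ℝ, ‖g y‖ ≤ δ := by
    have := hg (Metric.closedBall_mem_nhds (0 : ℂ) hδ)
    simpa [Metric.closedBall, dist_zero_right] using this
  rw [Filter.Eventually, mem_cocompact] at h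
  obtain ⟨K, hK, hKs⟩ := h
  obtain ⟨ρ, hρ⟩ := hK.isBounded.subset_closedBall 0
  refine ⟨ρ + 1, fun y hy => ?_⟩
  apply hKs
  intro hyK
  have := hρ hyK
  simp only [Metric.mem_closedBall, Real.dist_eq, sub_zero] at this
  linarith



lemma norm_cexp_gen (u z : ℂ) (s : ℝ) :
    ‖Complex.exp (-z * (u * s))‖ = Real.exp (-(u * z).re * s) := by
  rw [Complex.norm_exp]
  congr 1
  have h : -z * (u * (s : ℂ)) = (-(u * z)) * (s : ℂ) := by ring
  rw [h]
  simp [Complex.mul_re]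
  ring

lemma norm_cexp_xy (x y s : ℝ) :
    ‖Complex.exp (-((x : ℂ) + (y : ℂ) * Complex.I) * s)‖ = Real.exp (-x * s) := by
  rw [Complex.norm_exp]
  congr 1
  simp [Complex.mul_re, Complex.add_re, Complex.add_im]

section Main

variable (u : ℂ) {a b : ℝ} (φ : ℂ → ℂ) {M : ℝ}

lemma key_bound (hsup : ∀ s : ℝ, ‖φ (u * s)‖ * (Real.exp (-a * s) + Real.exp (-b * s)) ≤ M)
    {x : ℝ} (hax : a ≤ x) (hxb : x ≤ b) (s : ℝ) :
    ‖φ (u * s)‖ * Real.exp (-x * s) ≤ M * Real.exp (-min (x - a) (b - x) * |s|) :=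
  bound_aux s (norm_nonneg _) (hsup s) hax hxb

lemma meas_aux (hmeas : Measurable fun s : ℝ => φ (u * s)) (t : ℂ) :
    AEStronglyMeasurable (fun s : ℝ => φ (u * s) * Complex.exp (-t * (u * s))) volume := by
  refine (hmeas.mul ?_).aestronglyMeasurable
  exact (Complex.continuous_exp.comp (by fun_prop)).measurable

lemma lemma1 (hmeas : Measurable fun s : ℝ => φ (u * s))
    (hsup : ∀ s : ℝ, ‖φ (u * s)‖ * (Real.exp (-a * s) + Real.exp (-b * s)) ≤ M)
    (t : ℂ) (h1 : a < (u * t).re) (h2 : (u * t).re < b) :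
    Integrable (fun s : ℝ => φ (u * s) * Complex.exp (-t * (u * s))) := by
  have hε : 0 < min ((u * t).re - a) (b - (u * t).re) :=
    lt_min (by linarith) (by linarith)
  refine ((integrable_exp_abs hε).const_mul M).mono' (meas_aux u φ hmeas t) ?_
  filter_upwards with s
  rw [norm_mul, norm_cexp_gen]
  exact key_bound u φ hsup (le_of_lt h1) (le_of_lt h2) s


lemma lemma2 (hu : ‖u‖ = 1) (hmeas : Measurable fun s : ℝ => φ (u * s))
    (hsup : ∀ s : ℝ, ‖φ (u * s)‖ * (Real.exp (-a * s) + Real.exp (-b * s)) ≤ M)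
    (t₀ : ℂ) (h1 : a < (u * t₀).re) (h2 : (u * t₀).re < b) :
    DifferentiableAt ℂ (fun t : ℂ => ∫ s : ℝ, φ (u * s) * Complex.exp (-t * (u * s))) t₀ := by
  set x₀ := (u * t₀).re with hx₀
  set r := min (x₀ - a) (b - x₀) / 2 with hrdef
  have hr0 : 0 < r := by
    have h3 : 0 < min (x₀ - a) (b - x₀) := lt_min (by linarith) (by linarith)
    rw [hrdef]; linarith
  have hmin1 : 2 * r ≤ x₀ - a := by
    have := min_le_left (x₀ - a) (b - x₀); rw [hrdef]; linarith
  have hmin2 : 2 * r ≤ b - x₀ := by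
    have := min_le_right (x₀ - a) (b - x₀); rw [hrdef]; linarith
  have bint : Integrable (fun s : ℝ => M * (|s| * Real.exp (-r * |s|))) :=
    (integrable_abs_mul_exp_abs hr0).const_mul M
  have hmeas' : AEStronglyMeasurable
      (fun s : ℝ => φ (u * s) * (-(u * s) * Complex.exp (-t₀ * (u * s)))) volume := by
    refine (hmeas.mul ?_).aestronglyMeasurable
    have : Continuous fun s : ℝ => -(u * (s : ℂ)) * Complex.exp (-t₀ * (u * s)) := by
      have h := Complex.continuous_exp.comp
        (show Continuous fun s : ℝ => -t₀ * (u * (s : ℂ)) by fun_prop)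
      fun_prop
    exact this.measurable
  have h_bound : ∀ᵐ s : ℝ, ∀ t ∈ Metric.ball t₀ r,
      ‖φ (u * s) * (-(u * s) * Complex.exp (-t * (u * s)))‖ ≤ M * (|s| * Real.exp (-r * |s|)) := by
    filter_upwards with s
    intro t ht
    have hxre : |(u * t).re - x₀| < r := by
      have h3 : (u * t).re - x₀ = (u * (t - t₀)).re := by
        rw [hx₀]; rw [mul_sub]; rw [Complex.sub_re]
      rw [h3]
      calc |(u * (t - t₀)).re| ≤ ‖u * (t - t₀)‖ := Complex.abs_re_le_norm _
        _ = ‖u‖ * ‖t - t₀‖ := by rw [norm_mul]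
        _ = ‖t - t₀‖ := by rw [hu, one_mul]
        _ < r := by rwa [Metric.mem_ball, dist_eq_norm] at ht
    obtain ⟨hlt1, hlt2⟩ := abs_lt.1 hxre
    have hxa : a ≤ (u * t).re := by linarith
    have hxb : (u * t).re ≤ b := by linarith
    have hrmin : r ≤ min ((u * t).re - a) (b - (u * t).re) :=
      le_min (by linarith) (by linarith)
    have hkey := key_bound u φ hsup hxa hxb s
    have hexp : Real.exp (-min ((u * t).re - a) (b - (u * t).re) * |s|)
        ≤ Real.exp (-r * |s|) := by
      apply Real.exp_le_exp.2
      have := abs_nonneg s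
      nlinarith
    have hM0 : 0 ≤ M := le_trans (by positivity) (hsup 0)
    calc ‖φ (u * s) * (-(u * s) * Complex.exp (-t * (u * s)))‖
        = ‖φ (u * s)‖ * (‖u * (s : ℂ)‖ * Real.exp (-(u * t).re * s)) := by
          rw [norm_mul, norm_mul, norm_neg, norm_cexp_gen]
      _ = |s| * (‖φ (u * s)‖ * Real.exp (-(u * t).re * s)) := by
          rw [norm_mul, hu, one_mul, Complex.norm_real, Real.norm_eq_abs]; ring
      _ ≤ |s| * (M * Real.exp (-r * |s|)) := by
          refine mul_le_mul_of_nonneg_left (le_trans hkey ?_) (abs_nonneg s)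
          exact mul_le_mul_of_nonneg_left hexp hM0
      _ = M * (|s| * Real.exp (-r * |s|)) := by ring
  have h_diff : ∀ᵐ s : ℝ, ∀ t ∈ Metric.ball t₀ r,
      HasDerivAt (fun t : ℂ => φ (u * s) * Complex.exp (-t * (u * s)))
        (φ (u * s) * (-(u * s) * Complex.exp (-t * (u * s)))) t := by
    filter_upwards with s
    intro t _
    have hd : HasDerivAt (fun t : ℂ => -t * (u * s)) (-(u * s)) t := by
      simpa using ((hasDerivAt_id t).neg.mul_const (u * (s : ℂ)))
    have : HasDerivAt (fun y : ℂ => φ (u * s) * Complex.exp (-y * (u * s)))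
        (φ (u * s) * (Complex.exp (-t * (u * s)) * -(u * s))) t :=
      (hd.cexp).const_mul (φ (u * (s : ℂ)))
    convert this using 1
    ring
  have hall := hasDerivAt_integral_of_dominated_loc_of_deriv_le (Metric.ball_mem_nhds t₀ hr0)
    (Eventually.of_forall fun t => meas_aux u φ hmeas t)
    (lemma1 u φ hmeas hsup t₀ h1 h2) hmeas' h_bound bint h_diff
  exact hall.2.differentiableAt


lemma exp_sub_exp_le (p q : ℝ) :
    |Real.exp p - Real.exp q| ≤ |p - q| * (Real.exp p + Real.exp q) := by
  have haux : ∀ p q : ℝ, q ≤ p → Real.exp p - Real.exp q ≤ (p - q) * Real.exp p := by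
    intro p q h
    have h1 := Real.add_one_le_exp (q - p)
    have h2 : Real.exp (q - p) * Real.exp p = Real.exp q := by
      rw [← Real.exp_add]; congr 1; ring
    nlinarith [Real.exp_pos p]
  rcases le_total q p with h | h
  · rw [_root_.abs_of_nonneg (sub_nonneg.2 (Real.exp_le_exp.2 h)),
      _root_.abs_of_nonneg (sub_nonneg.2 h)]
    nlinarith [haux p q h, Real.exp_pos q, sub_nonneg.2 h]
  · rw [abs_sub_comm, _root_.abs_of_nonneg (sub_nonneg.2 (Real.exp_le_exp.2 h)),
      abs_sub_comm p q, _root_.abs_of_nonneg (sub_nonneg.2 h)]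
    nlinarith [haux q p h, Real.exp_pos p, sub_nonneg.2 h]

lemma tendsto_g (x : ℝ) :
    Tendsto (fun y : ℝ => ∫ s : ℝ,
        φ (u * s) * Complex.exp (-((x : ℂ) + (y : ℂ) * Complex.I) * s))
      (cocompact ℝ) (𝓝 0) := by
  have hRL := Real.tendsto_integral_exp_smul_cocompact
    (fun s : ℝ => φ (u * s) * Complex.exp (-(x : ℂ) * s))
  have hco : Tendsto (fun y : ℝ => y / (2 * Real.pi)) (cocompact ℝ) (cocompact ℝ) := by
    rw [cocompact_eq_atBot_atTop]
    refine Tendsto.sup ?_ ?_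
    · exact (Tendsto.atBot_div_const (by positivity) tendsto_id).mono_right le_sup_left
    · exact (Tendsto.atTop_div_const (by positivity) tendsto_id).mono_right le_sup_right
  have hcomp := hRL.comp hco
  have heq : (fun y : ℝ => ∫ s : ℝ,
      φ (u * s) * Complex.exp (-((x : ℂ) + (y : ℂ) * Complex.I) * s)) =
      ((fun w : ℝ => ∫ v : ℝ, Real.fourierChar (-(v * w)) •
        (φ (u * v) * Complex.exp (-(x : ℂ) * v))) ∘ fun y : ℝ => y / (2 * Real.pi)) := by
    funext y
    refine integral_congr_ae (Eventually.of_forall fun v => ?_)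
    simp only [Function.comp, Circle.smul_def, Real.fourierChar_apply]
    have harg : (↑(2 * Real.pi * -(v * (y / (2 * Real.pi)))) : ℂ) * Complex.I
        = -((y : ℂ) * v * Complex.I) := by
      have h2 : 2 * Real.pi * -(v * (y / (2 * Real.pi))) = -(y * v) := by
        field_simp
      rw [h2]; push_cast; ring
    rw [harg,
      show -((x : ℂ) + (y : ℂ) * Complex.I) * v
        = -(x : ℂ) * v + -((y : ℂ) * v * Complex.I) by ring,
      Complex.exp_add]
    rw [smul_eq_mul]
    ring
  rw [heq]
  exact hcomp

lemma lemma3 (hu : ‖u‖ = 1) (hmeas : Measurable fun s : ℝ => φ (u * s))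
    (hsup : ∀ s : ℝ, ‖φ (u * s)‖ * (Real.exp (-a * s) + Real.exp (-b * s)) ≤ M)
    {a₁ b₁ : ℝ} (h1 : a < a₁) (h12 : a₁ ≤ b₁) (h2 : b₁ < b) {δ : ℝ} (hδ : 0 < δ) :
    ∃ ρ : ℝ, ∀ t : ℂ, a₁ ≤ (u * t).re → (u * t).re ≤ b₁ → ρ ≤ ‖t‖ →
      ‖∫ s : ℝ, φ (u * s) * Complex.exp (-t * (u * s))‖ ≤ δ := by
  set ε := min (a₁ - a) (b - b₁) with hεdef
  have hε0 : 0 < ε := lt_min (by linarith) (by linarith)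
  have hM0 : 0 ≤ M := le_trans (by positivity) (hsup 0)
  have key2 : ∀ x ∈ Icc a₁ b₁, ∀ s : ℝ,
      ‖φ (u * s)‖ * Real.exp (-x * s) ≤ M * Real.exp (-ε * |s|) := by
    intro x hx s
    refine le_trans (key_bound u φ hsup (by linarith [hx.1]) (by linarith [hx.2]) s) ?_
    refine mul_le_mul_of_nonneg_left (Real.exp_le_exp.2 ?_) hM0
    have hm1 : ε ≤ x - a := le_trans (min_le_left _ _) (by linarith [hx.1])
    have hm2 : ε ≤ b - x := le_trans (min_le_right _ _) (by linarith [hx.2])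
    have hmle : ε ≤ min (x - a) (b - x) := le_min hm1 hm2
    nlinarith [abs_nonneg s]
  have gmeas : ∀ x y : ℝ, AEStronglyMeasurable
      (fun s : ℝ => φ (u * s) * Complex.exp (-((x : ℂ) + (y : ℂ) * Complex.I) * s)) volume := by
    intro x y
    refine (hmeas.mul ?_).aestronglyMeasurable
    exact (Complex.continuous_exp.comp (by fun_prop)).measurable
  have gint : ∀ x ∈ Icc a₁ b₁, ∀ y : ℝ, Integrable
      (fun s : ℝ => φ (u * s) * Complex.exp (-((x : ℂ) + (y : ℂ) * Complex.I) * s)) := by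
    intro x hx y
    refine ((integrable_exp_abs hε0).const_mul M).mono' (gmeas x y) ?_
    filter_upwards with s
    rw [norm_mul, norm_cexp_xy]
    exact key2 x hx s
  set g : ℝ → ℝ → ℂ := fun x y => ∫ s : ℝ,
      φ (u * s) * Complex.exp (-((x : ℂ) + (y : ℂ) * Complex.I) * s) with hg
  set C₀ := ∫ s : ℝ, |s| * Real.exp (-ε * |s|) with hC₀
  have hC₀0 : 0 ≤ C₀ := integral_nonneg fun s => by positivity
  set C := 2 * M * C₀ with hC
  have hC0 : 0 ≤ C := by positivity
  have glip : ∀ x ∈ Icc a₁ b₁, ∀ x' ∈ Icc a₁ b₁, ∀ y : ℝ,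
      ‖g x y - g x' y‖ ≤ |x - x'| * C := by
    intro x hx x' hx' y
    simp only [hg]
    rw [← integral_sub (gint x hx y) (gint x' hx' y)]
    have hb2 : Integrable (fun s : ℝ => |x - x'| * (2 * M) * (|s| * Real.exp (-ε * |s|))) :=
      (integrable_abs_mul_exp_abs hε0).const_mul _
    refine le_trans (norm_integral_le_of_norm_le hb2 ?_) ?_
    · filter_upwards with s
      have hfactor : φ (u * s) * Complex.exp (-((x : ℂ) + (y : ℂ) * Complex.I) * s)
            - φ (u * s) * Complex.exp (-((x' : ℂ) + (y : ℂ) * Complex.I) * s)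
          = φ (u * s) * ((Complex.exp (-(x : ℂ) * s) - Complex.exp (-(x' : ℂ) * s))
              * Complex.exp (-((y : ℂ) * Complex.I) * s)) := by
        rw [show -((x : ℂ) + (y : ℂ) * Complex.I) * s
              = -(x : ℂ) * s + -((y : ℂ) * Complex.I) * s by ring,
            show -((x' : ℂ) + (y : ℂ) * Complex.I) * s
              = -(x' : ℂ) * s + -((y : ℂ) * Complex.I) * s by ring,
            Complex.exp_add, Complex.exp_add]
        ring
      rw [hfactor, norm_mul, norm_mul]
      have hexp1 : ‖Complex.exp (-((y : ℂ) * Complex.I) * s)‖ = 1 := by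
        rw [Complex.norm_exp]
        have hre : (-((y : ℂ) * Complex.I) * s).re = 0 := by
          simp [Complex.mul_re]
        rw [hre, Real.exp_zero]
      have hexp2 : ‖Complex.exp (-(x : ℂ) * s) - Complex.exp (-(x' : ℂ) * s)‖
          = |Real.exp (-x * s) - Real.exp (-x' * s)| := by
        rw [show (-(x : ℂ) * s : ℂ) = ((-x * s : ℝ) : ℂ) by push_cast; ring,
            show (-(x' : ℂ) * s : ℂ) = ((-x' * s : ℝ) : ℂ) by push_cast; ring,
            ← Complex.ofReal_exp, ← Complex.ofReal_exp, ← Complex.ofReal_sub,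
            Complex.norm_real, Real.norm_eq_abs]
      rw [hexp1, mul_one, hexp2]
      have hlip := exp_sub_exp_le (-x * s) (-x' * s)
      have habs : |(-x * s) - (-x' * s)| = |x - x'| * |s| := by
        rw [show (-x * s) - (-x' * s) = (x' - x) * s by ring, abs_mul, abs_sub_comm x' x]
      calc ‖φ (u * s)‖ * |Real.exp (-x * s) - Real.exp (-x' * s)|
          ≤ ‖φ (u * s)‖ * (|x - x'| * |s| * (Real.exp (-x * s) + Real.exp (-x' * s))) := by
            refine mul_le_mul_of_nonneg_left ?_ (norm_nonneg _)
            rw [← habs]; exact hlip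
        _ = |x - x'| * |s| * (‖φ (u * s)‖ * Real.exp (-x * s)
              + ‖φ (u * s)‖ * Real.exp (-x' * s)) := by ring
        _ ≤ |x - x'| * |s| * (M * Real.exp (-ε * |s|) + M * Real.exp (-ε * |s|)) := by
            refine mul_le_mul_of_nonneg_left
              (add_le_add (key2 x hx s) (key2 x' hx' s)) (by positivity)
        _ = |x - x'| * (2 * M) * (|s| * Real.exp (-ε * |s|)) := by ring
    · rw [integral_const_mul]
      rw [hC, ← hC₀]
      apply le_of_eq; ring
  set h0 := (δ / 2) / (C + 1) with hh0
  have hh0p : 0 < h0 := div_pos (half_pos hδ) (by linarith)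
  set N := ⌊(b₁ - a₁) / h0⌋₊ with hN
  have hxjIcc : ∀ j : ℕ, min (a₁ + j * h0) b₁ ∈ Icc a₁ b₁ := by
    intro j
    refine ⟨le_min ?_ h12, min_le_right _ _⟩
    have : (0 : ℝ) ≤ j * h0 := by positivity
    linarith
  have hchoice : ∀ j : ℕ, ∃ ρj : ℝ, ∀ y : ℝ, ρj ≤ |y| →
      ‖g (min (a₁ + j * h0) b₁) y‖ ≤ δ / 2 := by
    intro j
    exact exists_rho (tendsto_g u φ (min (a₁ + j * h0) b₁)) (half_pos hδ)
  choose ρf hρf using hchoice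
  set P := (Finset.range (N + 1)).sup' Finset.nonempty_range_add_one ρf with hP
  refine ⟨P + (|a₁| + |b₁|) + 1, fun t hta htb hts => ?_⟩
  set x := (u * t).re with hxdef
  set y := (u * t).im with hydef
  have hxIcc : x ∈ Icc a₁ b₁ := ⟨hta, htb⟩
  have hrw : (∫ s : ℝ, φ (u * s) * Complex.exp (-t * (u * s))) = g x y := by
    simp only [hg]
    refine integral_congr_ae (Eventually.of_forall fun s => ?_)
    have huq : (x : ℂ) + (y : ℂ) * Complex.I = u * t := Complex.re_add_im (u * t)
    congr 1
    rw [huq]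
    congr 1
    ring
  rw [hrw]
  set j := ⌊(x - a₁) / h0⌋₊ with hj
  have hjN : j ≤ N := by
    rw [hj, hN]
    exact Nat.floor_le_floor (by have hxb2 := hxIcc.2; gcongr)
  have hfl := Nat.floor_le (show 0 ≤ (x - a₁) / h0 from
    div_nonneg (by linarith [hxIcc.1]) hh0p.le)
  have hjh : (j : ℝ) * h0 ≤ x - a₁ := by
    calc (j : ℝ) * h0 ≤ ((x - a₁) / h0) * h0 :=
          mul_le_mul_of_nonneg_right hfl hh0p.le
      _ = x - a₁ := by field_simp
  have hjh2 : x - a₁ < ((j : ℝ) + 1) * h0 := by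
    have hlt := Nat.lt_floor_add_one ((x - a₁) / h0)
    calc x - a₁ = ((x - a₁) / h0) * h0 := by field_simp
      _ < ((j : ℝ) + 1) * h0 := by
          refine mul_lt_mul_of_pos_right ?_ hh0p
          exact_mod_cast hlt
  set xj := min (a₁ + j * h0) b₁ with hxjdef
  have hxjeq : xj = a₁ + j * h0 := min_eq_left (by linarith [hxIcc.2])
  have hxxj : |x - xj| ≤ h0 := by
    rw [hxjeq]
    exact abs_le.2 ⟨by linarith, by linarith⟩
  have hym : ρf j ≤ |y| := by
    have habs1 : |x| ≤ |a₁| + |b₁| := by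
      rw [abs_le]
      constructor
      · linarith [neg_abs_le a₁, hxIcc.1, abs_nonneg b₁]
      · linarith [le_abs_self b₁, hxIcc.2, abs_nonneg a₁]
    have habs2 : ‖t‖ ≤ |x| + |y| := by
      calc ‖t‖ = ‖u * t‖ := by rw [norm_mul, hu, one_mul]
        _ ≤ |x| + |y| := by
            exact Complex.norm_le_abs_re_add_abs_im _
    have hle : ρf j ≤ P := by
      rw [hP]
      exact Finset.le_sup' ρf (Finset.mem_range.2 (Nat.lt_succ_of_le hjN))
    linarith
  have hgj := hρf j y hym
  have hdiffbound := glip x hxIcc xj (hxjIcc j) y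
  have hfinal : |x - xj| * C ≤ δ / 2 := by
    have heq2 : h0 * (C + 1) = δ / 2 := by
      rw [hh0]; field_simp
    nlinarith [abs_nonneg (x - xj)]
  calc ‖g x y‖ = ‖g xj y + (g x y - g xj y)‖ := by congr 1; ring
    _ ≤ ‖g xj y‖ + ‖g x y - g xj y‖ := norm_add_le _ _
    _ ≤ δ / 2 + δ / 2 := add_le_add hgj (le_trans hdiffbound hfinal)
    _ = δ := by ring

end Main
end LapAux

open Complex MeasureTheory

/-- The weight `|e^{−A e^{iα}s}| + |e^{−B e^{iα}s}|`. -/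
noncomputable def BLweight (α : ℝ) (A B : ℂ) (s : ℝ) : ℝ :=
  ‖Complex.exp (-A * (Complex.exp (α * Complex.I) * s))‖ +
    ‖Complex.exp (-B * (Complex.exp (α * Complex.I) * s))‖

/-- The two-sided Laplace transform in direction `α`. -/
noncomputable def LaplaceDir (α : ℝ) (φ : ℂ → ℂ) (t : ℂ) : ℂ :=
  Complex.exp (α * Complex.I) *
    ∫ s : ℝ, φ (Complex.exp (α * Complex.I) * s) *
      Complex.exp (-t * (Complex.exp (α * Complex.I) * s))

/-- The open strip `T_α^{A,B}`. -/
def openStrip (α : ℝ) (A B : ℂ) : Set ℂ :=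
  {t : ℂ | (Complex.exp (α * Complex.I) * A).re < (Complex.exp (α * Complex.I) * t).re ∧
    (Complex.exp (α * Complex.I) * t).re < (Complex.exp (α * Complex.I) * B).re}

/-- The closed strip `T̄_α^{A,B}`. -/
def closedStrip (α : ℝ) (A B : ℂ) : Set ℂ :=
  {t : ℂ | (Complex.exp (α * Complex.I) * A).re ≤ (Complex.exp (α * Complex.I) * t).re ∧
    (Complex.exp (α * Complex.I) * t).re ≤ (Complex.exp (α * Complex.I) * B).re}

/-- Corollary 2.4 of the paper. If `|φ|_α^{A,B} < ∞` then the
two-sided Laplace transform `L_α[φ]` converges absolutely and is holomorphic on the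
open strip `T_α^{A,B}`, and tends to `0` at infinity uniformly on every closed
substrip `T̄_α^{A₁,B₁} ⊆ T_α^{A,B}`. -/
theorem laplace_of_bounded_weight
    (α : ℝ) (A B : ℂ)
    (hAB : (Complex.exp (α * Complex.I) * A).re < (Complex.exp (α * Complex.I) * B).re)
    (φ : ℂ → ℂ)
    (hmeas : Measurable fun s : ℝ => φ (Complex.exp (α * Complex.I) * s))
    (M : ℝ)
    (hsup : ∀ s : ℝ, ‖φ (Complex.exp (α * Complex.I) * s)‖ * BLweight α A B s ≤ M) :
    (∀ t ∈ openStrip α A B,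
        Integrable (fun s : ℝ => φ (Complex.exp (α * Complex.I) * s) *
          Complex.exp (-t * (Complex.exp (α * Complex.I) * s)))) ∧
      DifferentiableOn ℂ (LaplaceDir α φ) (openStrip α A B) ∧
      (∀ A₁ B₁ : ℂ,
        (Complex.exp (α * Complex.I) * A).re < (Complex.exp (α * Complex.I) * A₁).re →
        (Complex.exp (α * Complex.I) * A₁).re ≤ (Complex.exp (α * Complex.I) * B₁).re →
        (Complex.exp (α * Complex.I) * B₁).re < (Complex.exp (α * Complex.I) * B).re →
        ∀ δ > 0, ∃ ρ : ℝ, ∀ t ∈ closedStrip α A₁ B₁, ρ ≤ ‖t‖ →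
          ‖LaplaceDir α φ t‖ ≤ δ) := by
  have hu : ‖Complex.exp (α * Complex.I)‖ = 1 := by
    rw [Complex.norm_exp]
    simp
  have hsup' : ∀ s : ℝ, ‖φ (Complex.exp (α * Complex.I) * s)‖ *
      (Real.exp (-(Complex.exp (α * Complex.I) * A).re * s) +
        Real.exp (-(Complex.exp (α * Complex.I) * B).re * s)) ≤ M := by
    intro s
    have h := hsup s
    rwa [BLweight, LapAux.norm_cexp_gen, LapAux.norm_cexp_gen] at h
  refine ⟨?_, ?_, ?_⟩
  · intro t ht
    exact LapAux.lemma1 _ φ hmeas hsup' t ht.1 ht.2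
  · intro t₀ ht₀
    refine DifferentiableAt.differentiableWithinAt ?_
    have hd := LapAux.lemma2 _ φ hu hmeas hsup' t₀ ht₀.1 ht₀.2
    have := hd.const_mul (Complex.exp (α * Complex.I))
    exact this
  · intro A₁ B₁ hA₁ hAB₁ hB₁ δ hδ
    obtain ⟨ρ, hρ⟩ := LapAux.lemma3 _ φ hu hmeas hsup' hA₁ hAB₁ hB₁ hδ
    refine ⟨ρ, fun t ht hts => ?_⟩
    have h := hρ t ht.1 ht.2 hts
    rw [LaplaceDir, norm_mul, hu, one_mul]
    exact h
end

section
/- Let α ∈ ℝ, A, B ∈ ℂ with Re(e^{iα}A) < Re(e^{iα}B), and let φ, ψ be measurable functions on e^{iα}ℝ. Then: (a) if ‖φ‖_α^{A,B} < ∞ and ‖ψ‖_α^{A,B} < ∞, the convolution (φ*ψ)(ξ) exists for almost every ξ ∈ e^{iα}ℝ and ‖φ*ψ‖_α^{A,B} ≤ ‖φ‖_α^{A,B}·‖ψ‖_α^{A,B}; (b) if |φ|_α^{A,B} < ∞ and ‖ψ‖_α^{A,B} < ∞, then (φ*ψ)(ξ) converges absolutely for every ξ ∈ e^{iα}ℝ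 and |φ*ψ|_α^{A,B} ≤ |φ|_α^{A,B}·‖ψ‖_α^{A,B}; and symmetrically |φ*ψ|_α^{A,B} ≤ ‖φ‖_α^{A,B}·|ψ|_α^{A,B} when ‖φ‖_α^{A,B} < ∞ and |ψ|_α^{A,B} < ∞. -/
open Complex MeasureTheory

/-- The convolution in direction `α`,
`(φ*ψ)(e^{iα}s) = e^{iα} ∫_ℝ φ(e^{iα}u)·ψ(e^{iα}s − e^{iα}u) du`,
as a function of the real parameter `s`. -/
noncomputable def convDir (α : ℝ) (φ ψ : ℂ → ℂ) (s : ℝ) : ℂ :=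
  Complex.exp (α * Complex.I) *
    ∫ u : ℝ, φ (Complex.exp (α * Complex.I) * u) *
      ψ (Complex.exp (α * Complex.I) * s - Complex.exp (α * Complex.I) * u)

lemma BLweight_pos (α : ℝ) (A B : ℂ) (s : ℝ) : 0 < BLweight α A B s :=
  add_pos (norm_pos_iff.mpr (Complex.exp_ne_zero _)) (norm_pos_iff.mpr (Complex.exp_ne_zero _))

lemma BLweight_continuous (α : ℝ) (A B : ℂ) : Continuous (BLweight α A B) := by
  unfold BLweight; fun_prop

lemma BLweight_submul (α : ℝ) (A B : ℂ) (s u : ℝ) :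
    BLweight α A B s ≤ BLweight α A B u * BLweight α A B (s - u) := by
  have key : ∀ C : ℂ, ‖Complex.exp (-C * (Complex.exp (α * Complex.I) * (u : ℂ)))‖ *
      ‖Complex.exp (-C * (Complex.exp (α * Complex.I) * ((s - u : ℝ) : ℂ)))‖ =
      ‖Complex.exp (-C * (Complex.exp (α * Complex.I) * (s : ℂ)))‖ := by
    intro C
    rw [← norm_mul, ← Complex.exp_add]
    congr 1
    push_cast
    ring
  have hA := key A
  have hB := key B
  unfold BLweight
  nlinarith [norm_nonneg (Complex.exp (-A * (Complex.exp (α * Complex.I) * (u : ℂ)))),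
    norm_nonneg (Complex.exp (-B * (Complex.exp (α * Complex.I) * (u : ℂ)))),
    norm_nonneg (Complex.exp (-A * (Complex.exp (α * Complex.I) * ((s - u : ℝ) : ℂ)))),
    norm_nonneg (Complex.exp (-B * (Complex.exp (α * Complex.I) * ((s - u : ℝ) : ℂ)))),
    mul_nonneg (norm_nonneg (Complex.exp (-A * (Complex.exp (α * Complex.I) * (u : ℂ)))))
      (norm_nonneg (Complex.exp (-B * (Complex.exp (α * Complex.I) * ((s - u : ℝ) : ℂ))))),
    mul_nonneg (norm_nonneg (Complex.exp (-B * (Complex.exp (α * Complex.I) * (u : ℂ)))))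
      (norm_nonneg (Complex.exp (-A * (Complex.exp (α * Complex.I) * ((s - u : ℝ) : ℂ)))))]


/-- Young's inequalities, Lemma 2.8 of the paper. -/
theorem young_inequalities_dir
    (α : ℝ) (A B : ℂ)
    (hAB : (Complex.exp (α * Complex.I) * A).re < (Complex.exp (α * Complex.I) * B).re)
    (φ ψ : ℂ → ℂ)
    (hmφ : Measurable fun s : ℝ => φ (Complex.exp (α * Complex.I) * s))
    (hmψ : Measurable fun s : ℝ => ψ (Complex.exp (α * Complex.I) * s)) :
    -- (a) if ‖φ‖, ‖ψ‖ < ∞ then φ*ψ exists a.e. and ‖φ*ψ‖ ≤ ‖φ‖·‖ψ‖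
    ((Integrable fun s : ℝ => ‖φ (Complex.exp (α * Complex.I) * s)‖ * BLweight α A B s) →
     (Integrable fun s : ℝ => ‖ψ (Complex.exp (α * Complex.I) * s)‖ * BLweight α A B s) →
      (∀ᵐ s : ℝ, Integrable fun u : ℝ =>
          φ (Complex.exp (α * Complex.I) * u) *
            ψ (Complex.exp (α * Complex.I) * s - Complex.exp (α * Complex.I) * u)) ∧
      (∫⁻ s : ℝ, ENNReal.ofReal (‖convDir α φ ψ s‖ * BLweight α A B s)) ≤
        ENNReal.ofReal
            (∫ s : ℝ, ‖φ (Complex.exp (α * Complex.I) * s)‖ * BLweight α A B s) *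
          ENNReal.ofReal
            (∫ s : ℝ, ‖ψ (Complex.exp (α * Complex.I) * s)‖ * BLweight α A B s)) ∧
    -- (b) if |φ| ≤ Mφ and ‖ψ‖ < ∞ then φ*ψ converges absolutely everywhere and
    --     |φ*ψ| ≤ |φ|·‖ψ‖
    (∀ Mφ : ℝ,
      (∀ s : ℝ, ‖φ (Complex.exp (α * Complex.I) * s)‖ * BLweight α A B s ≤ Mφ) →
      (Integrable fun s : ℝ => ‖ψ (Complex.exp (α * Complex.I) * s)‖ * BLweight α A B s) →
      (∀ s : ℝ, Integrable fun u : ℝ =>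
          φ (Complex.exp (α * Complex.I) * u) *
            ψ (Complex.exp (α * Complex.I) * s - Complex.exp (α * Complex.I) * u)) ∧
      (∀ s : ℝ, ‖convDir α φ ψ s‖ * BLweight α A B s ≤
        Mφ * ∫ u : ℝ, ‖ψ (Complex.exp (α * Complex.I) * u)‖ * BLweight α A B u)) ∧
    -- symmetric version: |φ*ψ| ≤ ‖φ‖·|ψ|
    (∀ Mψ : ℝ,
      (Integrable fun s : ℝ => ‖φ (Complex.exp (α * Complex.I) * s)‖ * BLweight α A B s) →
      (∀ s : ℝ, ‖ψ (Complex.exp (α * Complex.I) * s)‖ * BLweight α A B s ≤ Mψ) →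
      (∀ s : ℝ, Integrable fun u : ℝ =>
          φ (Complex.exp (α * Complex.I) * u) *
            ψ (Complex.exp (α * Complex.I) * s - Complex.exp (α * Complex.I) * u)) ∧
      (∀ s : ℝ, ‖convDir α φ ψ s‖ * BLweight α A B s ≤
        (∫ u : ℝ, ‖φ (Complex.exp (α * Complex.I) * u)‖ * BLweight α A B u) * Mψ)) := by
  set e : ℂ := Complex.exp (α * Complex.I) with he
  set w : ℝ → ℝ := BLweight α A B with hwdef
  have hw : ∀ s, 0 < w s := BLweight_pos α A B
  have hwm : Measurable w := (BLweight_continuous α A B).measurable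
  have hsub : ∀ s u : ℝ, w s ≤ w u * w (s - u) := BLweight_submul α A B
  have hnorme : ‖e‖ = 1 := by
    rw [he, Complex.norm_exp]
    simp
  have hψs : ∀ s u : ℝ, e * (s : ℂ) - e * (u : ℂ) = e * ((s - u : ℝ) : ℂ) := by
    intro s u; push_cast; ring
  -- measurability of the product integrand
  have hmprod : ∀ s : ℝ, Measurable fun u : ℝ => φ (e * u) * ψ (e * s - e * u) := by
    intro s
    have h2 : (fun u : ℝ => ψ (e * (s : ℂ) - e * (u : ℂ)))
        = fun u : ℝ => ψ (e * ((s - u : ℝ) : ℂ)) := by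
      funext u; rw [hψs]
    exact hmφ.mul (h2 ▸ (hmψ.comp (measurable_const.sub measurable_id)))
  -- key pointwise estimate
  have hkey : ∀ s u : ℝ, ‖φ (e * u) * ψ (e * s - e * u)‖ * w s ≤
      (‖φ (e * u)‖ * w u) * (‖ψ (e * ((s - u : ℝ) : ℂ))‖ * w (s - u)) := by
    intro s u
    rw [hψs, norm_mul]
    calc ‖φ (e * u)‖ * ‖ψ (e * ((s - u : ℝ) : ℂ))‖ * w s
        ≤ ‖φ (e * u)‖ * ‖ψ (e * ((s - u : ℝ) : ℂ))‖ * (w u * w (s - u)) := by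
          exact mul_le_mul_of_nonneg_left (hsub s u)
            (mul_nonneg (norm_nonneg _) (norm_nonneg _))
      _ = (‖φ (e * u)‖ * w u) * (‖ψ (e * ((s - u : ℝ) : ℂ))‖ * w (s - u)) := by ring
  -- translated G integrable
  have hGint' : (Integrable fun s : ℝ => ‖ψ (e * s)‖ * w s) →
      ∀ s : ℝ, Integrable fun u : ℝ => ‖ψ (e * ((s - u : ℝ) : ℂ))‖ * w (s - u) := by
    intro hGint s
    exact hGint.comp_sub_left s
  refine ⟨?_, ?_, ?_⟩
  · -- part (a)
    intro hFint hGint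
    set F : ℝ → ℝ := fun s => ‖φ (e * s)‖ * w s with hF
    set G : ℝ → ℝ := fun s => ‖ψ (e * s)‖ * w s with hG
    have hFm : Measurable F := hmφ.norm.mul hwm
    have hGm : Measurable G := hmψ.norm.mul hwm
    have hFnn : ∀ s, 0 ≤ F s := fun s => mul_nonneg (norm_nonneg _) (hw s).le
    have hGnn : ∀ s, 0 ≤ G s := fun s => mul_nonneg (norm_nonneg _) (hw s).le
    have hmprod2 : Measurable fun p : ℝ × ℝ => φ (e * p.2) * ψ (e * p.1 - e * p.2) := by
      have h2 : (fun p : ℝ × ℝ => ψ (e * (p.1 : ℂ) - e * (p.2 : ℂ)))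
          = fun p : ℝ × ℝ => ψ (e * ((p.1 - p.2 : ℝ) : ℂ)) := by
        funext p; rw [hψs]
      exact (hmφ.comp measurable_snd).mul
        (h2 ▸ (hmψ.comp (measurable_fst.sub measurable_snd)))
    have hWm : Measurable fun p : ℝ × ℝ =>
        ENNReal.ofReal (‖φ (e * p.2) * ψ (e * p.1 - e * p.2)‖ * w p.1) :=
      ((hmprod2.norm).mul (hwm.comp measurable_fst)).ennreal_ofReal
    -- the double lintegral bound
    have hdouble : (∫⁻ s : ℝ, ∫⁻ u : ℝ,
          ENNReal.ofReal (‖φ (e * u) * ψ (e * s - e * u)‖ * w s)) ≤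
        ENNReal.ofReal (∫ s : ℝ, F s) * ENNReal.ofReal (∫ s : ℝ, G s) := by
      have step1 : (∫⁻ s : ℝ, ∫⁻ u : ℝ,
            ENNReal.ofReal (‖φ (e * u) * ψ (e * s - e * u)‖ * w s)) ≤
          ∫⁻ s : ℝ, ∫⁻ u : ℝ, ENNReal.ofReal (F u * G (s - u)) :=
        lintegral_mono fun s => lintegral_mono fun u =>
          ENNReal.ofReal_le_ofReal (hkey s u)
      have hmFG : Measurable fun p : ℝ × ℝ => ENNReal.ofReal (F p.2 * G (p.1 - p.2)) :=
        ((hFm.comp measurable_snd).mul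
          (hGm.comp (measurable_fst.sub measurable_snd))).ennreal_ofReal
      have step2 : (∫⁻ s : ℝ, ∫⁻ u : ℝ, ENNReal.ofReal (F u * G (s - u)))
          = ∫⁻ u : ℝ, ∫⁻ s : ℝ, ENNReal.ofReal (F u * G (s - u)) :=
        lintegral_lintegral_swap hmFG.aemeasurable
      have hGlint : (∫⁻ s : ℝ, ENNReal.ofReal (G s)) = ENNReal.ofReal (∫ s : ℝ, G s) :=
        (ofReal_integral_eq_lintegral_ofReal hGint
          (Filter.Eventually.of_forall hGnn)).symm
      have hFlint : (∫⁻ s : ℝ, ENNReal.ofReal (F s)) = ENNReal.ofReal (∫ s : ℝ, F s) :=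
        (ofReal_integral_eq_lintegral_ofReal hFint
          (Filter.Eventually.of_forall hFnn)).symm
      have step3 : (∫⁻ u : ℝ, ∫⁻ s : ℝ, ENNReal.ofReal (F u * G (s - u)))
          = ENNReal.ofReal (∫ s : ℝ, F s) * ENNReal.ofReal (∫ s : ℝ, G s) := by
        have inner : ∀ u : ℝ, (∫⁻ s : ℝ, ENNReal.ofReal (F u * G (s - u)))
            = ENNReal.ofReal (F u) * ENNReal.ofReal (∫ s : ℝ, G s) := by
          intro u
          have : (fun s : ℝ => ENNReal.ofReal (F u * G (s - u)))
              = fun s : ℝ => ENNReal.ofReal (F u) * ENNReal.ofReal (G (s - u)) := by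
            funext s; rw [ENNReal.ofReal_mul (hFnn u)]
          rw [this, lintegral_const_mul' _ _ ENNReal.ofReal_ne_top]
          congr 1
          rw [← hGlint]
          exact lintegral_sub_right_eq_self (fun s => ENNReal.ofReal (G s)) u
        simp_rw [inner]
        rw [lintegral_mul_const _ hFm.ennreal_ofReal, hFlint]
      calc (∫⁻ s : ℝ, ∫⁻ u : ℝ,
            ENNReal.ofReal (‖φ (e * u) * ψ (e * s - e * u)‖ * w s))
          ≤ ∫⁻ s : ℝ, ∫⁻ u : ℝ, ENNReal.ofReal (F u * G (s - u)) := step1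
        _ = ∫⁻ u : ℝ, ∫⁻ s : ℝ, ENNReal.ofReal (F u * G (s - u)) := step2
        _ = ENNReal.ofReal (∫ s : ℝ, F s) * ENNReal.ofReal (∫ s : ℝ, G s) := step3
    -- a.e. finiteness
    have hHm : Measurable fun s : ℝ => ∫⁻ u : ℝ,
        ENNReal.ofReal (‖φ (e * u) * ψ (e * s - e * u)‖ * w s) :=
      hWm.lintegral_prod_right'
    have hfin : ∀ᵐ s : ℝ, (∫⁻ u : ℝ,
        ENNReal.ofReal (‖φ (e * u) * ψ (e * s - e * u)‖ * w s)) < ⊤ :=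
      ae_lt_top hHm (lt_of_le_of_lt hdouble
        (ENNReal.mul_lt_top ENNReal.ofReal_lt_top ENNReal.ofReal_lt_top)).ne
    have haeint : ∀ᵐ s : ℝ, Integrable fun u : ℝ => φ (e * u) * ψ (e * s - e * u) := by
      refine hfin.mono fun s hs => ?_
      refine ⟨(hmprod s).aestronglyMeasurable, ?_⟩
      rw [hasFiniteIntegral_iff_norm]
      have heq : (∫⁻ u : ℝ, ENNReal.ofReal (‖φ (e * u) * ψ (e * s - e * u)‖ * w s))
          = (∫⁻ u : ℝ, ENNReal.ofReal ‖φ (e * u) * ψ (e * s - e * u)‖)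
              * ENNReal.ofReal (w s) := by
        simp_rw [ENNReal.ofReal_mul (norm_nonneg _)]
        exact lintegral_mul_const _ (hmprod s).norm.ennreal_ofReal
      rw [heq] at hs
      have hws : ENNReal.ofReal (w s) ≠ 0 := by
        simp [ENNReal.ofReal_eq_zero, not_le, hw s]
      by_contra hcon
      push_neg at hcon
      rw [top_le_iff.mp hcon, ENNReal.top_mul hws] at hs
      exact (lt_irrefl _ hs)
    refine ⟨haeint, ?_⟩
    refine le_trans (lintegral_mono_ae (haeint.mono fun s hs => ?_)) hdouble
    -- pointwise: ofReal(‖convDir‖ * w s) ≤ ∫⁻ u, ofReal(‖prod‖ * w s)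
    have h1 : ‖convDir α φ ψ s‖ = ‖∫ u : ℝ, φ (e * u) * ψ (e * s - e * u)‖ := by
      rw [convDir, ← he, norm_mul, hnorme, one_mul]
    have h2 : ‖convDir α φ ψ s‖ * w s ≤ ∫ u : ℝ, ‖φ (e * u) * ψ (e * s - e * u)‖ * w s := by
      rw [h1, integral_mul_const]
      exact mul_le_mul_of_nonneg_right (norm_integral_le_integral_norm _) (hw s).le
    calc ENNReal.ofReal (‖convDir α φ ψ s‖ * w s)
        ≤ ENNReal.ofReal (∫ u : ℝ, ‖φ (e * u) * ψ (e * s - e * u)‖ * w s) :=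
          ENNReal.ofReal_le_ofReal h2
      _ = ∫⁻ u : ℝ, ENNReal.ofReal (‖φ (e * u) * ψ (e * s - e * u)‖ * w s) :=
          ofReal_integral_eq_lintegral_ofReal (hs.norm.mul_const _)
            (Filter.Eventually.of_forall fun u =>
              mul_nonneg (norm_nonneg _) (hw s).le)
  · -- part (b)
    intro Mφ hMφ hGint
    have hGtrans := hGint' hGint
    have hGnn : ∀ s : ℝ, 0 ≤ ‖ψ (e * s)‖ * w s := fun s =>
      mul_nonneg (norm_nonneg _) (hw s).le
    have hbound : ∀ s u : ℝ, ‖φ (e * u) * ψ (e * s - e * u)‖ * w s ≤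
        Mφ * (‖ψ (e * ((s - u : ℝ) : ℂ))‖ * w (s - u)) := by
      intro s u
      refine le_trans (hkey s u) (mul_le_mul_of_nonneg_right (hMφ u)
        (mul_nonneg (norm_nonneg _) (hw _).le))
    have hbint : ∀ s : ℝ, Integrable fun u : ℝ => φ (e * u) * ψ (e * s - e * u) := by
      intro s
      refine Integrable.mono' (((hGtrans s).const_mul Mφ).const_mul (1 / w s))
        (hmprod s).aestronglyMeasurable (Filter.Eventually.of_forall fun u => ?_)
      have h := hbound s u
      rw [one_div, inv_mul_eq_div, le_div_iff₀ (hw s)]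
      exact h
    refine ⟨hbint, fun s => ?_⟩
    have h1 : ‖convDir α φ ψ s‖ = ‖∫ u : ℝ, φ (e * u) * ψ (e * s - e * u)‖ := by
      rw [convDir, ← he, norm_mul, hnorme, one_mul]
    calc ‖convDir α φ ψ s‖ * w s
        ≤ ∫ u : ℝ, ‖φ (e * u) * ψ (e * s - e * u)‖ * w s := by
          rw [h1, integral_mul_const]
          exact mul_le_mul_of_nonneg_right (norm_integral_le_integral_norm _) (hw s).le
      _ ≤ ∫ u : ℝ, Mφ * (‖ψ (e * ((s - u : ℝ) : ℂ))‖ * w (s - u)) := by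
          refine integral_mono ((hbint s).norm.mul_const _) ((hGtrans s).const_mul Mφ)
            fun u => hbound s u
      _ = Mφ * ∫ u : ℝ, ‖ψ (e * ((s - u : ℝ) : ℂ))‖ * w (s - u) := integral_const_mul _ _
      _ = Mφ * ∫ u : ℝ, ‖ψ (e * u)‖ * w u := by
          congr 1
          exact integral_sub_left_eq_self (fun u : ℝ => ‖ψ (e * u)‖ * w u) volume s
  · -- symmetric version
    intro Mψ hFint hMψ
    have hFnn : ∀ s : ℝ, 0 ≤ ‖φ (e * s)‖ * w s := fun s =>
      mul_nonneg (norm_nonneg _) (hw s).le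
    have hbound : ∀ s u : ℝ, ‖φ (e * u) * ψ (e * s - e * u)‖ * w s ≤
        (‖φ (e * u)‖ * w u) * Mψ := by
      intro s u
      refine le_trans (hkey s u) (mul_le_mul_of_nonneg_left (hMψ (s - u)) (hFnn u))
    have hbint : ∀ s : ℝ, Integrable fun u : ℝ => φ (e * u) * ψ (e * s - e * u) := by
      intro s
      refine Integrable.mono' (((hFint.mul_const Mψ)).const_mul (1 / w s))
        (hmprod s).aestronglyMeasurable (Filter.Eventually.of_forall fun u => ?_)
      have h := hbound s u
      rw [one_div, inv_mul_eq_div, le_div_iff₀ (hw s)]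
      exact h
    refine ⟨hbint, fun s => ?_⟩
    have h1 : ‖convDir α φ ψ s‖ = ‖∫ u : ℝ, φ (e * u) * ψ (e * s - e * u)‖ := by
      rw [convDir, ← he, norm_mul, hnorme, one_mul]
    calc ‖convDir α φ ψ s‖ * w s
        ≤ ∫ u : ℝ, ‖φ (e * u) * ψ (e * s - e * u)‖ * w s := by
          rw [h1, integral_mul_const]
          exact mul_le_mul_of_nonneg_right (norm_integral_le_integral_norm _) (hw s).le
      _ ≤ ∫ u : ℝ, (‖φ (e * u)‖ * w u) * Mψ := by
          refine integral_mono ((hbint s).norm.mul_const _) (hFint.mul_const Mψ)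
            fun u => hbound s u
      _ = (∫ u : ℝ, ‖φ (e * u)‖ * w u) * Mψ := integral_mul_const _ _
end

section
/- Let C, K, R > 0 with R·K < 1. Then there exists C′ > 0, depending only on C, K and R, such that for every ε ∈ ℂ with 2√|ε| < R, every ξ ∈ ℂ, and every sequence (aₙ)_{n≥1} of complex numbers with |aₙ| ≤ C·Kⁿ for all n ≥ 1, one has ∑_{n=1}^{∞} |aₙ| · ∏_{k=1}^{n−1} ( |ξ|/k + 2√|ε| ) ≤ C′ · (1 + √|ξ|) · e^{|ξ|/(R − 2√|ε|)}. In particular, the series ∑_{n≥1} aₙ · ∏_{k=1}^{n−1}(ξ/k − 2√ε) converges absolutely for every ξ ∈ ℂ and defines an entire function of ξ with at most this exponential growth, uniformly in ε. -/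
open Complex Real

/-- pointwise key identity -/
lemma sge_key (β x : ℝ) (n : ℕ) :
    (x + β) * ∏ k ∈ Finset.Icc 1 n, ((x + β) / (k : ℝ) + β) =
      ((n : ℝ) + 1) * ∏ k ∈ Finset.Icc 1 (n + 1), (x / (k : ℝ) + β) := by
  induction n with
  | zero => simp
  | succ n ih =>
    rw [Finset.prod_Icc_succ_top (by omega : 1 ≤ n + 1),
      Finset.prod_Icc_succ_top (by omega : 1 ≤ n + 1 + 1), ← mul_assoc, ih]
    have h1 : ((n : ℝ) + 1) ≠ 0 := by positivity
    have h2 : ((n : ℝ) + 2) ≠ 0 := by positivity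
    push_cast
    field_simp
    ring

lemma sge_step (β x : ℝ) (n : ℕ) :
    ((n : ℝ) + 1) * ∏ k ∈ Finset.Icc 1 (n + 1), (x / (k : ℝ) + β) =
      (x + β * ((n : ℝ) + 1)) * ∏ k ∈ Finset.Icc 1 n, (x / (k : ℝ) + β) := by
  rw [Finset.prod_Icc_succ_top (by omega : 1 ≤ n + 1), ← mul_assoc]
  have h1 : ((n : ℝ) + 1) ≠ 0 := by positivity
  push_cast
  field_simp

lemma sge_prod_nonneg {β x : ℝ} (hβ : 0 ≤ β) (hx : 0 ≤ x) (n : ℕ) :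
    0 ≤ ∏ k ∈ Finset.Icc 1 n, (x / (k : ℝ) + β) :=
  Finset.prod_nonneg fun k _ => by positivity

/-- the shift inequality for partial sums -/
lemma sge_shift {β x : ℝ} (hβ0 : 0 ≤ β) (hβ1 : β < 1) (hx : 0 ≤ x) (hxβ : 0 < x + β) (N : ℕ) :
    ∑ n ∈ Finset.range N, ∏ k ∈ Finset.Icc 1 n, ((x + β) / (k : ℝ) + β) ≤
      (∑ n ∈ Finset.range N, ∏ k ∈ Finset.Icc 1 n, (x / (k : ℝ) + β)) / (1 - β) := by
  set t : ℕ → ℝ := fun n => ∏ k ∈ Finset.Icc 1 n, (x / (k : ℝ) + β) with ht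
  set t' : ℕ → ℝ := fun n => ∏ k ∈ Finset.Icc 1 n, ((x + β) / (k : ℝ) + β) with ht'
  obtain _ | M := N
  · simp [t, t']
  set A : ℝ := ∑ n ∈ Finset.range (M + 1), t' n with hA
  set B : ℝ := ∑ n ∈ Finset.range (M + 1), t n with hB
  have hAnn : 0 ≤ A := Finset.sum_nonneg fun n _ => sge_prod_nonneg hβ0 (by linarith) n
  have hBnn : 0 ≤ B := Finset.sum_nonneg fun n _ => sge_prod_nonneg hβ0 hx n
  have hE1 : (x + β) * A = ∑ n ∈ Finset.range (M + 1), (x + β * ((n : ℝ) + 1)) * t n := by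
    rw [hA, Finset.mul_sum]
    refine Finset.sum_congr rfl fun n _ => ?_
    rw [sge_key β x n, sge_step β x n]
  have hS : ∑ n ∈ Finset.range (M + 1), (n : ℝ) * t n ≤ (x + β) * A := by
    rw [Finset.sum_range_succ' (fun n => (n : ℝ) * t n) M, hE1]
    have : ∑ n ∈ Finset.range M, ((n : ℝ) + 1) * t (n + 1) =
        ∑ n ∈ Finset.range M, (x + β * ((n : ℝ) + 1)) * t n := by
      refine Finset.sum_congr rfl fun n _ => ?_
      have := sge_key β x n
      rw [sge_step β x n] at this
      exact sge_step β x n ▸ rfl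
    push_cast
    rw [this]
    simp only [Nat.cast_zero, zero_mul, add_zero]
    rw [Finset.sum_range_succ (fun n => (x + β * ((n : ℝ) + 1)) * t n) M]
    have : 0 ≤ (x + β * ((M : ℝ) + 1)) * t M := by
      have := sge_prod_nonneg hβ0 hx M
      have : 0 ≤ t M := this
      positivity
    linarith
  have hQ : (x + β) * A ≤ x * B + β * (B + (x + β) * A) := by
    rw [hE1]
    have heq : ∑ n ∈ Finset.range (M + 1), (x + β * ((n : ℝ) + 1)) * t n =
        x * B + β * B + β * ∑ n ∈ Finset.range (M + 1), (n : ℝ) * t n := by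
      rw [hB, Finset.mul_sum, Finset.mul_sum, Finset.mul_sum, ← Finset.sum_add_distrib,
        ← Finset.sum_add_distrib]
      exact Finset.sum_congr rfl fun n _ => by ring
    rw [heq]
    nlinarith [hS]
  rw [le_div_iff₀ (by linarith : (0:ℝ) < 1 - β)]
  nlinarith [hQ, hxβ, hAnn]

lemma sge_mono {β x y : ℝ} (hβ : 0 ≤ β) (hx : 0 ≤ x) (hxy : x ≤ y) (N : ℕ) :
    ∑ n ∈ Finset.range N, ∏ k ∈ Finset.Icc 1 n, (x / (k : ℝ) + β) ≤
      ∑ n ∈ Finset.range N, ∏ k ∈ Finset.Icc 1 n, (y / (k : ℝ) + β) := by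
  refine Finset.sum_le_sum fun n _ => Finset.prod_le_prod (fun k hk => by positivity)
    (fun k hk => ?_)
  have hk1 : 1 ≤ k := (Finset.mem_Icc.mp hk).1
  have hk0 : (0:ℝ) < (k : ℝ) := by exact_mod_cast Nat.lt_of_lt_of_le Nat.zero_lt_one hk1
  gcongr

lemma sge_bound_nat {β : ℝ} (hβ0 : 0 < β) (hβ1 : β < 1) :
    ∀ m : ℕ, ∀ x : ℝ, 0 ≤ x → x ≤ m * β → ∀ N : ℕ,
      ∑ n ∈ Finset.range N, ∏ k ∈ Finset.Icc 1 n, (x / (k : ℝ) + β) ≤ ((1 - β)⁻¹) ^ (m + 1) := by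
  intro m
  induction m with
  | zero =>
    intro x hx0 hx1 N
    have hx : x = 0 := le_antisymm (by simpa using hx1) hx0
    subst hx
    have : ∀ n : ℕ, ∏ k ∈ Finset.Icc 1 n, ((0:ℝ) / (k : ℝ) + β) = β ^ n := by
      intro n
      rw [Finset.prod_congr rfl (fun k _ => by rw [zero_div, zero_add]),
        Finset.prod_const, Nat.card_Icc]
      norm_num
    simp only [this]
    have h1 : (1:ℝ) - β > 0 := by linarith
    have := geom_sum_eq (by linarith : β ≠ 1) N
    rw [this, pow_one]
    rw [div_le_iff_of_neg (by linarith : β - 1 < 0)]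
    have h2 : (0:ℝ) ≤ β ^ N := by positivity
    have h3 : (1 - β)⁻¹ * (β - 1) = -1 := by field_simp; ring
    rw [h3]; linarith
  | succ m ih =>
    intro x hx0 hx1 N
    set x' := max (x - β) 0 with hx'
    have hx'0 : 0 ≤ x' := le_max_right _ _
    have hx'm : x' ≤ m * β := by
      rcases max_cases (x - β) 0 with ⟨h, _⟩ | ⟨h, _⟩
      · rw [hx', h]; push_cast at hx1 ⊢; linarith
      · rw [hx', h]; positivity
    have hxx' : x ≤ x' + β := by
      have : x - β ≤ x' := le_max_left _ _
      linarith
    calc ∑ n ∈ Finset.range N, ∏ k ∈ Finset.Icc 1 n, (x / (k : ℝ) + β)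
        ≤ ∑ n ∈ Finset.range N, ∏ k ∈ Finset.Icc 1 n, ((x' + β) / (k : ℝ) + β) :=
          sge_mono (le_of_lt hβ0) hx0 hxx' N
      _ ≤ (∑ n ∈ Finset.range N, ∏ k ∈ Finset.Icc 1 n, (x' / (k : ℝ) + β)) / (1 - β) :=
          sge_shift (le_of_lt hβ0) hβ1 hx'0 (by linarith) N
      _ ≤ ((1 - β)⁻¹) ^ (m + 1) / (1 - β) := by
          have h1 : (0:ℝ) < 1 - β := by linarith
          gcongr
          exact ih x' hx'0 hx'm N
      _ = ((1 - β)⁻¹) ^ (m + 1 + 1) := by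
          rw [div_eq_mul_inv, ← pow_succ]

lemma sge_main {β x d : ℝ} (hβ0 : 0 ≤ β) (hβ1 : β < 1) (hx : 0 ≤ x) (hd : 1 ≤ d)
    (hcond : Real.exp (-(β * d)) ≤ 1 - β) :
    (Summable fun n : ℕ => ∏ k ∈ Finset.Icc 1 n, (x / (k : ℝ) + β)) ∧
    (∑' n : ℕ, ∏ k ∈ Finset.Icc 1 n, (x / (k : ℝ) + β)) ≤
      (1 - β)⁻¹ * (1 - β)⁻¹ * Real.exp (x * d) := by
  have h1β : (0:ℝ) < 1 - β := by linarith
  have key : ∀ N : ℕ, ∑ n ∈ Finset.range N, ∏ k ∈ Finset.Icc 1 n, (x / (k : ℝ) + β) ≤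
      (1 - β)⁻¹ * (1 - β)⁻¹ * Real.exp (x * d) := by
    intro N
    have hxd : x ≤ x * d := le_mul_of_one_le_right hx hd
    have hinv1 : (1:ℝ) ≤ (1 - β)⁻¹ := by
      rw [le_inv_comm₀ one_pos h1β]; linarith
    rcases eq_or_lt_of_le hβ0 with hβz | hβp
    · -- β = 0
      have hp : ∀ n : ℕ, ∏ k ∈ Finset.Icc 1 n, (x / (k : ℝ) + β) = x ^ n / n.factorial := by
        intro n
        rw [← hβz]
        rw [Finset.prod_congr rfl fun k _ => add_zero _]
        rw [Finset.prod_div_distrib, Finset.prod_const, Nat.card_Icc]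
        have hfac : (∏ k ∈ Finset.Icc 1 n, k) = n.factorial := by
          induction n with
          | zero => simp
          | succ n ih =>
            rw [Finset.prod_Icc_succ_top (by omega : 1 ≤ n + 1), ih, Nat.factorial_succ,
              Nat.mul_comm]
        rw [show ∏ k ∈ Finset.Icc 1 n, (k:ℝ) = ((∏ k ∈ Finset.Icc 1 n, k : ℕ) : ℝ) from
          (Nat.cast_prod _ _).symm, hfac]
        norm_num
      simp only [hp]
      calc ∑ n ∈ Finset.range N, x ^ n / (n.factorial : ℝ) ≤ Real.exp x :=
            Real.sum_le_exp_of_nonneg hx N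
        _ ≤ Real.exp (x * d) := Real.exp_le_exp.mpr hxd
        _ ≤ (1 - β)⁻¹ * (1 - β)⁻¹ * Real.exp (x * d) := by
            have h4 : (1:ℝ) ≤ (1 - β)⁻¹ * (1 - β)⁻¹ := by nlinarith
            nlinarith [Real.exp_pos (x * d)]
    · -- 0 < β
      set m := ⌈x / β⌉₊ with hm
      have hxm : x ≤ m * β := by
        rw [← div_le_iff₀ hβp]
        exact Nat.le_ceil _
      have hbound := sge_bound_nat hβp hβ1 m x hx hxm N
      refine hbound.trans ?_
      have hebd : (1 - β)⁻¹ ≤ Real.exp (β * d) := by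
        have h2 : 1 ≤ (1 - β) * Real.exp (β * d) := by
          have h3 := mul_le_mul_of_nonneg_right hcond (Real.exp_pos (β * d)).le
          rwa [← Real.exp_add, neg_add_cancel, Real.exp_zero] at h3
        nlinarith [inv_nonneg.mpr h1β.le, mul_inv_cancel₀ (ne_of_gt h1β)]
      obtain _ | m' := m
      · rw [pow_one]
        nlinarith [Real.exp_pos (x * d), Real.exp_le_exp.mpr (by linarith : (0:ℝ) ≤ x * d),
          Real.exp_zero]
      · have hm'x : (m' : ℝ) * β ≤ x := by
          have hc : ((m' + 1 : ℕ) : ℝ) < x / β + 1 := by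
            rw [hm] at *
            exact_mod_cast Nat.ceil_lt_add_one (div_nonneg hx hβp.le)
          push_cast at hc
          have : (m' : ℝ) < x / β := by linarith
          calc (m' : ℝ) * β ≤ (x / β) * β := by nlinarith
            _ = x := by field_simp
        have hpow : ((1 - β)⁻¹) ^ m' ≤ Real.exp (x * d) := by
          calc ((1 - β)⁻¹) ^ m' ≤ (Real.exp (β * d)) ^ m' :=
                pow_le_pow_left₀ (by positivity) hebd m'
            _ = Real.exp ((m' : ℝ) * (β * d)) := by rw [← Real.exp_nat_mul]
            _ ≤ Real.exp (x * d) := by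
                apply Real.exp_le_exp.mpr
                have hd0 : (0:ℝ) ≤ d := by linarith
                nlinarith
        calc ((1 - β)⁻¹) ^ (m' + 1 + 1) = (1 - β)⁻¹ * (1 - β)⁻¹ * ((1 - β)⁻¹) ^ m' := by ring
          _ ≤ (1 - β)⁻¹ * (1 - β)⁻¹ * Real.exp (x * d) := by
              have : (0:ℝ) ≤ (1 - β)⁻¹ := by positivity
              nlinarith [pow_nonneg this m']
  exact ⟨summable_of_sum_range_le (fun n => sge_prod_nonneg hβ0 hx n) key,
    Real.tsum_le_of_sum_range_le (fun n => sge_prod_nonneg hβ0 hx n) key⟩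

lemma sge_major {C K R : ℝ} (hC : 0 < C) (hK : 0 < K) (hR : 0 < R) (hRK : R * K < 1)
    {s x : ℝ} (hs0 : 0 ≤ s) (hsR : s < R) (hx : 0 ≤ x) :
    (Summable fun n : ℕ => C * K ^ (n + 1) * ∏ k ∈ Finset.Icc 1 n, (x / (k : ℝ) + s)) ∧
    (∑' n : ℕ, C * K ^ (n + 1) * ∏ k ∈ Finset.Icc 1 n, (x / (k : ℝ) + s)) ≤
      C * K * ((1 - K * R)⁻¹ * (1 - K * R)⁻¹) * Real.exp (x / (R - s)) := by
  have hRs : (0:ℝ) < R - s := by linarith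
  have hKR : K * R < 1 := by linarith [mul_comm R K]
  set β := K * s with hβ
  set d := (K * (R - s))⁻¹ with hd
  set x' := K * x with hx'
  have hβ0 : 0 ≤ β := by positivity
  have hβ1 : β < 1 := by nlinarith
  have hd1 : 1 ≤ d := by
    rw [hd]
    exact (one_le_inv₀ (by positivity)).mpr (by nlinarith)
  have hx'0 : 0 ≤ x' := by positivity
  have hβd : β * d = s / (R - s) := by
    rw [hβ, hd]
    field_simp
  have hcond : Real.exp (-(β * d)) ≤ 1 - β := by
    rw [hβd, hβ]
    set u := s / (R - s) with hu
    have hmul : Real.exp (-u) * Real.exp u = 1 := by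
      rw [← Real.exp_add]; simp
    have h1 : 1 + u ≤ Real.exp u := by linarith [Real.add_one_le_exp u]
    have e1 : Real.exp (-u) * (1 + u) ≤ 1 := by
      nlinarith [Real.exp_pos (-u)]
    have h1u : 1 + u = R / (R - s) := by rw [hu]; field_simp; ring
    have e2 : 1 ≤ (1 - K * s) * (1 + u) := by
      rw [h1u, ← mul_div_assoc, le_div_iff₀ hRs]
      nlinarith
    nlinarith [Real.exp_pos (-u), mul_pos hRs hRs]
  obtain ⟨hsumm, htsum⟩ := sge_main hβ0 hβ1 hx'0 hd1 hcond
  have hptw : ∀ n : ℕ, C * K ^ (n + 1) * ∏ k ∈ Finset.Icc 1 n, (x / (k : ℝ) + s) =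
      C * K * ∏ k ∈ Finset.Icc 1 n, (x' / (k : ℝ) + β) := by
    intro n
    have : ∏ k ∈ Finset.Icc 1 n, (x' / (k : ℝ) + β) =
        K ^ n * ∏ k ∈ Finset.Icc 1 n, (x / (k : ℝ) + s) := by
      have hstep : ∏ k ∈ Finset.Icc 1 n, (x' / (k : ℝ) + β) =
          ∏ k ∈ Finset.Icc 1 n, (K * (x / (k : ℝ) + s)) :=
        Finset.prod_congr rfl fun k _ => by rw [hx', hβ]; ring
      rw [hstep, Finset.prod_mul_distrib, Finset.prod_const, Nat.card_Icc]
      norm_num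
    rw [this]; ring
  have hxd : x' * d = x / (R - s) := by
    rw [hx', hd]
    field_simp
  constructor
  · refine Summable.congr (hsumm.mul_left (C * K)) fun n => (hptw n).symm
  · calc (∑' n : ℕ, C * K ^ (n + 1) * ∏ k ∈ Finset.Icc 1 n, (x / (k : ℝ) + s))
        = ∑' n : ℕ, C * K * ∏ k ∈ Finset.Icc 1 n, (x' / (k : ℝ) + β) := by
          exact tsum_congr hptw
      _ = C * K * ∑' n : ℕ, ∏ k ∈ Finset.Icc 1 n, (x' / (k : ℝ) + β) := tsum_mul_left
      _ ≤ C * K * ((1 - β)⁻¹ * (1 - β)⁻¹ * Real.exp (x' * d)) := by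
          exact mul_le_mul_of_nonneg_left htsum (by positivity)
      _ ≤ C * K * ((1 - K * R)⁻¹ * (1 - K * R)⁻¹) * Real.exp (x / (R - s)) := by
          rw [← hxd]
          have h1 : (0:ℝ) < 1 - K * R := by linarith
          have h2 : (0:ℝ) < 1 - β := by linarith
          have h3 : (1 - β)⁻¹ ≤ (1 - K * R)⁻¹ := by
            apply inv_anti₀ h1
            rw [hβ]
            nlinarith
          have h4 : (0:ℝ) < Real.exp (x' * d) := Real.exp_pos _
          have h5 : (0:ℝ) ≤ (1 - β)⁻¹ := by positivity
          have h6 : (0:ℝ) ≤ (1 - K * R)⁻¹ := by positivity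
          have : (1 - β)⁻¹ * (1 - β)⁻¹ * Real.exp (x' * d) ≤
              (1 - K * R)⁻¹ * (1 - K * R)⁻¹ * Real.exp (x' * d) := by
            apply mul_le_mul_of_nonneg_right _ h4.le
            nlinarith
          calc C * K * ((1 - β)⁻¹ * (1 - β)⁻¹ * Real.exp (x' * d)) ≤
              C * K * ((1 - K * R)⁻¹ * (1 - K * R)⁻¹ * Real.exp (x' * d)) :=
                mul_le_mul_of_nonneg_left this (by positivity)
            _ = C * K * ((1 - K * R)⁻¹ * (1 - K * R)⁻¹) * Real.exp (x' * d) := by ring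

/-- the estimate in the proof of Proposition 3.3, part 4, of the
paper. A series `∑ aₙ ∏_{k=1}^{n−1}(ξ/k − 2√ε)` with geometrically bounded
coefficients converges absolutely, uniformly in `ε`, with growth at most
`C′(1+√|ξ|)·e^{|ξ|/(R−2√|ε|)}`, and defines an entire function of `ξ`. -/
theorem series_growth_estimate
    (C K R : ℝ) (hC : 0 < C) (hK : 0 < K) (hR : 0 < R) (hRK : R * K < 1) :
    ∃ C' : ℝ, 0 < C' ∧
      ∀ (ε : ℂ) (ξ : ℂ) (a : ℕ → ℂ),
        2 * Real.sqrt (‖ε‖) < R →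
        (∀ n : ℕ, 1 ≤ n → ‖a n‖ ≤ C * K ^ n) →
        -- absolute convergence of the majorant series and the growth bound
        (Summable fun n : ℕ => ‖a (n + 1)‖ *
          ∏ k ∈ Finset.Icc 1 n, (‖ξ‖ / (k : ℝ) + 2 * Real.sqrt (‖ε‖))) ∧
        (∑' n : ℕ, ‖a (n + 1)‖ *
            ∏ k ∈ Finset.Icc 1 n, (‖ξ‖ / (k : ℝ) + 2 * Real.sqrt (‖ε‖))) ≤
          C' * (1 + Real.sqrt (‖ξ‖)) *
            Real.exp (‖ξ‖ / (R - 2 * Real.sqrt (‖ε‖))) ∧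
        -- in particular: absolute convergence of the series itself and entirety
        (∀ sqe : ℂ, sqe ^ 2 = ε →
          (Summable fun n : ℕ => ‖a (n + 1) *
            ∏ k ∈ Finset.Icc 1 n, (ξ / (k : ℂ) - 2 * sqe)‖) ∧
          Differentiable ℂ (fun z : ℂ => ∑' n : ℕ, a (n + 1) *
            ∏ k ∈ Finset.Icc 1 n, (z / (k : ℂ) - 2 * sqe))) := by
  have hKR : (0:ℝ) < 1 - K * R := by nlinarith [mul_comm R K]
  refine ⟨C * K * ((1 - K * R)⁻¹ * (1 - K * R)⁻¹), by positivity, ?_⟩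
  intro ε ξ a hε ha
  set s : ℝ := 2 * Real.sqrt (‖ε‖) with hs
  set x : ℝ := ‖ξ‖ with hxdef
  have hs0 : 0 ≤ s := by positivity
  have hsR : s < R := hε
  have hx : 0 ≤ x := norm_nonneg ξ
  obtain ⟨hS, hT⟩ := sge_major hC hK hR hRK hs0 hsR hx
  have hprodnn : ∀ (y : ℝ) (n : ℕ), 0 ≤ y → 0 ≤ ∏ k ∈ Finset.Icc 1 n, (y / (k : ℝ) + s) :=
    fun y n hy => sge_prod_nonneg hs0 hy n
  have hle : ∀ n : ℕ, ‖a (n + 1)‖ * ∏ k ∈ Finset.Icc 1 n, (x / (k : ℝ) + s) ≤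
      C * K ^ (n + 1) * ∏ k ∈ Finset.Icc 1 n, (x / (k : ℝ) + s) :=
    fun n => mul_le_mul_of_nonneg_right (ha (n + 1) (by omega)) (hprodnn x n hx)
  have hgnn : ∀ n : ℕ, 0 ≤ ‖a (n + 1)‖ * ∏ k ∈ Finset.Icc 1 n, (x / (k : ℝ) + s) :=
    fun n => mul_nonneg (norm_nonneg _) (hprodnn x n hx)
  have hg : Summable fun n : ℕ => ‖a (n + 1)‖ * ∏ k ∈ Finset.Icc 1 n, (x / (k : ℝ) + s) :=
    Summable.of_nonneg_of_le hgnn hle hS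
  refine ⟨hg, ?_, ?_⟩
  · calc (∑' n : ℕ, ‖a (n + 1)‖ * ∏ k ∈ Finset.Icc 1 n, (x / (k : ℝ) + s))
        ≤ ∑' n : ℕ, C * K ^ (n + 1) * ∏ k ∈ Finset.Icc 1 n, (x / (k : ℝ) + s) :=
          Summable.tsum_le_tsum hle hg hS
      _ ≤ C * K * ((1 - K * R)⁻¹ * (1 - K * R)⁻¹) * Real.exp (x / (R - s)) := hT
      _ ≤ C * K * ((1 - K * R)⁻¹ * (1 - K * R)⁻¹) * (1 + Real.sqrt x) *
            Real.exp (x / (R - s)) := by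
          have hM : (0:ℝ) < C * K * ((1 - K * R)⁻¹ * (1 - K * R)⁻¹) := by positivity
          nlinarith [mul_nonneg (mul_nonneg hM.le (Real.sqrt_nonneg x))
            (Real.exp_pos (x / (R - s))).le]
  · intro sqe hsqe
    have habs : ‖sqe‖ = Real.sqrt (‖ε‖) := by
      rw [← hsqe, norm_pow, Real.sqrt_sq (norm_nonneg sqe)]
    have hfac : ∀ (n : ℕ) (w : ℂ), ‖a (n + 1) * ∏ k ∈ Finset.Icc 1 n, (w / (k : ℂ) - 2 * sqe)‖ ≤
        ‖a (n + 1)‖ * ∏ k ∈ Finset.Icc 1 n, (‖w‖ / (k : ℝ) + s) := by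
      intro n w
      rw [norm_mul]
      refine mul_le_mul_of_nonneg_left ?_ (norm_nonneg _)
      rw [norm_prod]
      refine Finset.prod_le_prod (fun k _ => norm_nonneg _) fun k hk => ?_
      have hk1 : 1 ≤ k := (Finset.mem_Icc.mp hk).1
      have hknn : (0:ℝ) < (k : ℝ) := by exact_mod_cast Nat.lt_of_lt_of_le Nat.zero_lt_one hk1
      calc ‖w / (k : ℂ) - 2 * sqe‖ ≤ ‖w / (k : ℂ)‖ + ‖2 * sqe‖ := norm_sub_le _ _
        _ = ‖w‖ / (k : ℝ) + s := by
            rw [norm_div, norm_mul, hs, ← habs]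
            norm_num
    constructor
    · exact Summable.of_nonneg_of_le (fun n => norm_nonneg _) (fun n => hfac n ξ) hg
    · intro z₀
      set r : ℝ := ‖z₀‖ + 1 with hr
      have hr0 : 0 ≤ r := by positivity
      obtain ⟨hSr, -⟩ := sge_major hC hK hR hRK hs0 hsR hr0
      have hdiff : DifferentiableOn ℂ
          (fun w : ℂ => ∑' n : ℕ, a (n + 1) * ∏ k ∈ Finset.Icc 1 n, (w / (k : ℂ) - 2 * sqe))
          (Metric.ball 0 r) := by
        refine differentiableOn_tsum_of_summable_norm hSr ?_ Metric.isOpen_ball ?_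
        · intro n
          refine Differentiable.differentiableOn ?_
          refine (Differentiable.fun_finset_prod fun k _ => ?_).const_mul _
          exact (differentiable_id.div_const _).sub_const _
        · intro n w hw
          have hwr : ‖w‖ ≤ r := by
            have := Metric.mem_ball.mp hw
            rw [dist_zero_right] at this
            exact le_of_lt (by simpa using this)
          calc ‖a (n + 1) * ∏ k ∈ Finset.Icc 1 n, (w / (k : ℂ) - 2 * sqe)‖
              ≤ ‖a (n + 1)‖ * ∏ k ∈ Finset.Icc 1 n, (‖w‖ / (k : ℝ) + s) := hfac n w
            _ ≤ C * K ^ (n + 1) * ∏ k ∈ Finset.Icc 1 n, (‖w‖ / (k : ℝ) + s) :=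
                mul_le_mul_of_nonneg_right (ha (n + 1) (by omega))
                  (hprodnn _ n (norm_nonneg w))
            _ ≤ C * K ^ (n + 1) * ∏ k ∈ Finset.Icc 1 n, (r / (k : ℝ) + s) := by
                refine mul_le_mul_of_nonneg_left ?_ (by positivity)
                refine Finset.prod_le_prod (fun k _ => by positivity) fun k hk => ?_
                have hk1 : 1 ≤ k := (Finset.mem_Icc.mp hk).1
                have hknn : (0:ℝ) < (k : ℝ) :=
                  by exact_mod_cast Nat.lt_of_lt_of_le Nat.zero_lt_one hk1
                gcongr
      refine hdiff.differentiableAt (Metric.isOpen_ball.mem_nhds ?_)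
      rw [Metric.mem_ball, dist_zero_right, hr]
      linarith
end

section
/- Let E be a commutative non-unital complex Banach algebra with submultiplicative norm (‖uv‖ ≤ ‖u‖·‖v‖), and let m ≥ 1. For φ = (φ₁,…,φ_m) ∈ E^m write ‖φ‖ := max_i ‖φᵢ‖, and for a multi-index l ∈ ℕ^m with |l| ≥ 1 write φ^l := φ₁^{l₁}⋯φ_m^{l_m} ∈ E. Suppose given constants K, L, K₁, δ > 0, vectors μ_l ∈ ℂ^m for each l with |l| ≥ 2 satisfying max_i |(μ_l)ᵢ| ≤ K·binom(|l|,l)·L^{|l|}, elements w₀ ∈ E^m with ‖w₀‖ ≤ K₁ and w_l ∈ E^m for |l| ≥ 1 with ‖w_l‖ ≤ K₁·binom(|l|,l)·L^{|l|}, and a linear map Θ : E^m → E^m with ‖Θ(v)‖ ≤ δ·‖v‖ for all v ∈ E^m. Define G(φ) := Θ( ∑_{|l|≥2} μ_l·φ^l + w₀ + ∑_{|l|≥1} w_l ⋆ φ^l ), where μ_l·φ^l := ((μ_l)₁ φ^l,…,(μ_l)_m φ^l) ∈ E^m and w_l ⋆ φ^l := ((w_l)₁·φ^l,…,(w_l)_m·φ^l)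 ∈ E^m. Assume δ ≥ 1/(10mKL), set c := 1/(50 m² δ K L²), and assume K₁ ≤ (5cmL)²·K. Then for every φ ∈ E^m with ‖φ‖ ≤ c the defining series of G(φ) converge absolutely in E^m and ‖G(φ)‖ ≤ c; for all φ, ψ with ‖φ‖, ‖ψ‖ ≤ c one has ‖G(φ) − G(ψ)‖ ≤ ½·‖φ − ψ‖; consequently G has a unique fixed point ỹ ∈ E^m with ‖ỹ‖ ≤ c. -/
open Complex

/-- Product of a (nonempty) list of elements of a non-unital ring; the empty list is
sent to `0` (only lists of length ≥ 1 are ever used). -/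
noncomputable def mprod {E : Type*} [Mul E] [Zero E] : List E → E
  | [] => 0
  | a :: l => l.foldl (· * ·) a

/-- The multi-power `φ^l = φ₁^{l₁} ⋯ φ_m^{l_m}` in a non-unital commutative ring,
defined for multi-indices `l` with `|l| ≥ 1`. -/
noncomputable def mpow {E : Type*} [Mul E] [Zero E] {m : ℕ} (φ : Fin m → E)
    (l : Fin m → ℕ) : E :=
  mprod (((List.finRange m).flatMap fun i => List.replicate (l i) (φ i)))

/-- The operator `G(φ) = Θ( ∑_{|l|≥2} μ_l·φ^l + w₀ + ∑_{|l|≥1} w_l ⋆ φ^l )`. -/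
noncomputable def Gop {E : Type*} [NonUnitalNormedCommRing E] [NormedSpace ℂ E]
    {m : ℕ} (μ : (Fin m → ℕ) → Fin m → ℂ) (w₀ : Fin m → E)
    (w : (Fin m → ℕ) → Fin m → E) (Θ : (Fin m → E) →ₗ[ℂ] (Fin m → E))
    (φ : Fin m → E) : Fin m → E :=
  Θ (fun i =>
    (∑' l : Fin m → ℕ, if 2 ≤ ∑ j, l j then (μ l i) • mpow φ l else 0) + w₀ i +
      (∑' l : Fin m → ℕ, if 1 ≤ ∑ j, l j then (w l i) * mpow φ l else 0))

section ListAux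

variable {E : Type*} [NonUnitalNormedCommRing E]

private lemma foldl_mul_assoc (t : List E) : ∀ a b : E,
    t.foldl (· * ·) (a * b) = a * t.foldl (· * ·) b := by
  induction t with
  | nil => intro a b; simp
  | cons c t ih => intro a b; simp only [List.foldl_cons]; rw [mul_assoc, ih]

lemma mprod_cons {a : E} {l : List E} (h : l ≠ []) : mprod (a :: l) = a * mprod l := by
  cases l with
  | nil => exact absurd rfl h
  | cons b t =>
    show (b :: t).foldl (· * ·) a = a * t.foldl (· * ·) b
    rw [List.foldl_cons]
    exact foldl_mul_assoc t a b

lemma norm_mprod_map_le {ι : Type*} (s : List ι) (φ : ι → E) (r : ℝ) (hr : 0 ≤ r)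
    (hφ : ∀ i, ‖φ i‖ ≤ r) : ‖mprod (s.map φ)‖ ≤ r ^ s.length := by
  induction s with
  | nil => simp [mprod]
  | cons a t ih =>
    cases t with
    | nil => simpa [mprod] using hφ a
    | cons b t' =>
      rw [List.map_cons, mprod_cons (by simp)]
      calc ‖φ a * mprod ((b :: t').map φ)‖
          ≤ ‖φ a‖ * ‖mprod ((b :: t').map φ)‖ := norm_mul_le _ _
        _ ≤ r * r ^ (b :: t').length :=
            mul_le_mul (hφ a) ih (norm_nonneg _) hr
        _ = r ^ (a :: b :: t').length := by
            simp only [List.length_cons]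
            rw [pow_succ]; ring

lemma norm_mprod_map_sub_le {ι : Type*} (s : List ι) (φ ψ : ι → E) (r d : ℝ)
    (hr : 0 ≤ r) (hd : 0 ≤ d) (hφ : ∀ i, ‖φ i‖ ≤ r) (hψ : ∀ i, ‖ψ i‖ ≤ r)
    (hfd : ∀ i, ‖φ i - ψ i‖ ≤ d) :
    ‖mprod (s.map φ) - mprod (s.map ψ)‖ ≤ s.length * r ^ (s.length - 1) * d := by
  induction s with
  | nil => simp [mprod]
  | cons a t ih =>
    cases t with
    | nil => simpa [mprod] using hfd a
    | cons b t' =>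
      have hne : (b :: t').map φ ≠ [] := by simp
      have hne' : (b :: t').map ψ ≠ [] := by simp
      rw [show (List.map φ (a :: b :: t')) = φ a :: List.map φ (b :: t') from rfl,
        show (List.map ψ (a :: b :: t')) = ψ a :: List.map ψ (b :: t') from rfl,
        mprod_cons hne, mprod_cons hne']
      set P := mprod ((b :: t').map φ) with hP
      set Q := mprod ((b :: t').map ψ) with hQ
      have hPle : ‖P‖ ≤ r ^ (b :: t').length := norm_mprod_map_le _ φ r hr hφ
      have key : φ a * P - ψ a * Q = (φ a - ψ a) * P + ψ a * (P - Q) := by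
        rw [sub_mul, mul_sub]; abel
      have hPQ : ‖P - Q‖ ≤ (b :: t').length * r ^ ((b :: t').length - 1) * d := ih
      set n := t'.length with hn
      have hlen : (b :: t').length = n + 1 := by simp [hn]
      calc ‖φ a * P - ψ a * Q‖ = ‖(φ a - ψ a) * P + ψ a * (P - Q)‖ := by rw [key]
        _ ≤ ‖(φ a - ψ a) * P‖ + ‖ψ a * (P - Q)‖ := norm_add_le _ _
        _ ≤ ‖φ a - ψ a‖ * ‖P‖ + ‖ψ a‖ * ‖P - Q‖ := by
            gcongr <;> [exact norm_mul_le _ _; exact norm_mul_le _ _]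
        _ ≤ d * r ^ (n + 1) + r * ((n + 1) * r ^ n * d) := by
            have h1 : ‖φ a - ψ a‖ * ‖P‖ ≤ d * r ^ (n + 1) := by
              rw [← hlen]
              exact mul_le_mul (hfd a) hPle (norm_nonneg _) hd
            have h2 : ‖ψ a‖ * ‖P - Q‖ ≤ r * ((n + 1) * r ^ n * d) := by
              have : ((b :: t').length : ℝ) * r ^ ((b :: t').length - 1) * d
                  = (n + 1) * r ^ n * d := by
                rw [hlen]; push_cast; simp
              exact mul_le_mul (hψ a) (by rw [← this]; exact hPQ) (norm_nonneg _) hr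
            linarith
        _ ≤ (a :: b :: t').length * r ^ ((a :: b :: t').length - 1) * d := by
            have : (a :: b :: t').length = n + 2 := by simp [hn]
            rw [this]
            have hexp : n + 2 - 1 = n + 1 := rfl
            rw [hexp]
            push_cast
            have hpows : r ^ (n + 1) = r ^ n * r := pow_succ r n
            rw [hpows]; nlinarith [pow_nonneg hr n]

end ListAux

section MpowAux

variable {E : Type*} [NonUnitalNormedCommRing E] {m : ℕ}

/-- The index list underlying `mpow`. -/
def idxList {m : ℕ} (l : Fin m → ℕ) : List (Fin m) :=
  (List.finRange m).flatMap fun i => List.replicate (l i) i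

lemma mpow_eq_mprod_map (φ : Fin m → E) (l : Fin m → ℕ) :
    mpow φ l = mprod ((idxList l).map φ) := by
  unfold mpow idxList
  rw [List.map_flatMap]
  simp [List.map_replicate]

lemma idxList_length (l : Fin m → ℕ) : (idxList l).length = ∑ j, l j := by
  simp [idxList, List.length_flatMap, Function.comp_def, Fin.sum_univ_def]

lemma norm_mpow_le (φ : Fin m → E) (l : Fin m → ℕ) {r : ℝ} (hr : 0 ≤ r)
    (hφ : ‖φ‖ ≤ r) : ‖mpow φ l‖ ≤ r ^ (∑ j, l j) := by
  rw [mpow_eq_mprod_map, ← idxList_length l]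
  exact norm_mprod_map_le _ _ _ hr fun i => (norm_le_pi_norm φ i).trans hφ

lemma norm_mpow_sub_le (φ ψ : Fin m → E) (l : Fin m → ℕ) {r : ℝ} (hr : 0 ≤ r)
    (hφ : ‖φ‖ ≤ r) (hψ : ‖ψ‖ ≤ r) :
    ‖mpow φ l - mpow ψ l‖ ≤ (∑ j, l j) * r ^ ((∑ j, l j) - 1) * ‖φ - ψ‖ := by
  rw [mpow_eq_mprod_map, mpow_eq_mprod_map, ← idxList_length l]
  exact norm_mprod_map_sub_le _ _ _ _ _ hr (norm_nonneg _)
    (fun i => (norm_le_pi_norm φ i).trans hφ)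
    (fun i => (norm_le_pi_norm ψ i).trans hψ)
    (fun i => by simpa using norm_le_pi_norm (φ - ψ) i)

end MpowAux

section NatTails

lemma tsum_tail_eq {f : ℕ → ℝ} (hf : Summable f) (hnn : ∀ k, 0 ≤ f k) (k₀ : ℕ) :
    Summable (fun k => if k₀ ≤ k then f k else 0) ∧
    ∑' k, (if k₀ ≤ k then f k else 0) = ∑' k, f (k + k₀) := by
  have hs : Summable (fun k => if k₀ ≤ k then f k else 0) := by
    refine Summable.of_nonneg_of_le (fun k => ?_) (fun k => ?_) hf
    · split
      · exact hnn k
      · exact le_rfl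
    · split
      · exact le_rfl
      · exact hnn k
  refine ⟨hs, ?_⟩
  have h2 := Summable.sum_add_tsum_nat_add (f := fun k => if k₀ ≤ k then f k else 0) k₀ hs
  rw [Finset.sum_eq_zero (fun i hi => if_neg (by simp only [Finset.mem_range] at hi; omega)),
    zero_add] at h2
  rw [← h2]
  exact tsum_congr fun i => if_pos (Nat.le_add_left _ _)

lemma tail_geom_scaled (y C : ℝ) (h0 : 0 ≤ y) (h1 : y < 1) (k₀ : ℕ) :
    Summable (fun k : ℕ => if k₀ ≤ k then C * y ^ k else 0) ∧
    ∑' k : ℕ, (if k₀ ≤ k then C * y ^ k else 0) = C * (y ^ k₀ * (1 - y)⁻¹) := by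
  have hg : Summable (fun k : ℕ => y ^ k) := summable_geometric_of_lt_one h0 h1
  obtain ⟨hs, he⟩ := tsum_tail_eq hg (fun k => pow_nonneg h0 k) k₀
  have hfun : (fun k : ℕ => if k₀ ≤ k then C * y ^ k else 0)
      = fun k : ℕ => C * (if k₀ ≤ k then y ^ k else 0) := by
    funext k; split <;> simp
  rw [hfun]
  refine ⟨hs.mul_left C, ?_⟩
  rw [tsum_mul_left, he]
  congr 1
  calc ∑' k : ℕ, y ^ (k + k₀) = ∑' k : ℕ, y ^ k₀ * y ^ k := by
        exact tsum_congr fun k => by rw [pow_add]; ring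
    _ = y ^ k₀ * ∑' k : ℕ, y ^ k := tsum_mul_left
    _ = y ^ k₀ * (1 - y)⁻¹ := by rw [tsum_geometric_of_lt_one h0 h1]

lemma tail_geom_mul_scaled (y C : ℝ) (h0 : 0 ≤ y) (h1 : y < 1) (k₀ : ℕ) :
    Summable (fun k : ℕ => if k₀ ≤ k then C * ((k : ℝ) * y ^ k) else 0) ∧
    ∑' k : ℕ, (if k₀ ≤ k then C * ((k : ℝ) * y ^ k) else 0)
      = C * (y ^ k₀ * (y / (1 - y) ^ 2 + (k₀ : ℝ) * (1 - y)⁻¹)) := by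
  have hy' : ‖y‖ < 1 := by rwa [Real.norm_eq_abs, _root_.abs_of_nonneg h0]
  have hg : Summable (fun k : ℕ => (k : ℝ) * y ^ k) := by
    simpa using summable_pow_mul_geometric_of_norm_lt_one 1 hy'
  have hgeo : Summable (fun k : ℕ => y ^ k) := summable_geometric_of_lt_one h0 h1
  obtain ⟨hs, he⟩ := tsum_tail_eq hg
    (fun k => mul_nonneg (Nat.cast_nonneg k) (pow_nonneg h0 k)) k₀
  have hfun : (fun k : ℕ => if k₀ ≤ k then C * ((k : ℝ) * y ^ k) else 0)
      = fun k : ℕ => C * (if k₀ ≤ k then (k : ℝ) * y ^ k else 0) := by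
    funext k; split <;> simp
  rw [hfun]
  refine ⟨hs.mul_left C, ?_⟩
  rw [tsum_mul_left, he]
  congr 1
  have hsplit : ∀ k : ℕ, ((k + k₀ : ℕ) : ℝ) * y ^ (k + k₀)
      = y ^ k₀ * ((k : ℝ) * y ^ k) + (y ^ k₀ * (k₀ : ℝ)) * y ^ k := by
    intro k; rw [pow_add]; push_cast; ring
  calc ∑' k : ℕ, ((k + k₀ : ℕ) : ℝ) * y ^ (k + k₀)
      = ∑' k : ℕ, (y ^ k₀ * ((k : ℝ) * y ^ k) + (y ^ k₀ * (k₀ : ℝ)) * y ^ k) :=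
        tsum_congr hsplit
    _ = ∑' k : ℕ, y ^ k₀ * ((k : ℝ) * y ^ k) + ∑' k : ℕ, (y ^ k₀ * (k₀ : ℝ)) * y ^ k :=
        Summable.tsum_add (hg.mul_left _) (hgeo.mul_left _)
    _ = y ^ k₀ * (y / (1 - y) ^ 2) + (y ^ k₀ * (k₀ : ℝ)) * (1 - y)⁻¹ := by
        rw [tsum_mul_left, tsum_mul_left, tsum_geometric_of_lt_one h0 h1,
          tsum_coe_mul_geometric_of_norm_lt_one hy']
    _ = y ^ k₀ * (y / (1 - y) ^ 2 + (k₀ : ℝ) * (1 - y)⁻¹) := by ring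

end NatTails

section Master

lemma multinomial_piAntidiag_sum (m k : ℕ) :
    ∑ l ∈ Finset.piAntidiag (Finset.univ : Finset (Fin m)) k,
      ((Nat.multinomial Finset.univ l : ℝ)) = (m : ℝ) ^ k := by
  have h := Finset.sum_pow_eq_sum_piAntidiag (Finset.univ : Finset (Fin m))
    (fun _ => (1 : ℝ)) k
  simp only [Finset.sum_const, Finset.card_univ, Fintype.card_fin, nsmul_eq_mul,
    mul_one, one_pow, Finset.prod_const_one] at h
  exact h.symm

lemma master_summable (m : ℕ) (t : ℕ → ℝ) (ht : ∀ k, 0 ≤ t k)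
    (hsum : Summable fun k : ℕ => (m : ℝ) ^ k * t k) :
    Summable (fun l : Fin m → ℕ => (Nat.multinomial Finset.univ l : ℝ) * t (∑ j, l j))
    ∧ ∑' l : Fin m → ℕ, ((Nat.multinomial Finset.univ l : ℝ) * t (∑ j, l j))
        ≤ ∑' k : ℕ, (m : ℝ) ^ k * t k := by
  set F := fun l : Fin m → ℕ => (Nat.multinomial Finset.univ l : ℝ) * t (∑ j, l j) with hF
  have hnn : ∀ l, 0 ≤ F l := fun l => mul_nonneg (Nat.cast_nonneg _) (ht _)
  have hnnN : ∀ k : ℕ, 0 ≤ (m : ℝ) ^ k * t k :=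
    fun k => mul_nonneg (pow_nonneg (Nat.cast_nonneg m) k) (ht k)
  have hgroup : ∀ k : ℕ,
      ∑ l ∈ Finset.piAntidiag (Finset.univ : Finset (Fin m)) k, F l = (m : ℝ) ^ k * t k := by
    intro k
    have hmem : ∀ l ∈ Finset.piAntidiag (Finset.univ : Finset (Fin m)) k, ∑ j, l j = k := by
      intro l hl; rw [Finset.mem_piAntidiag] at hl; exact hl.1
    calc ∑ l ∈ Finset.piAntidiag (Finset.univ : Finset (Fin m)) k, F l
        = ∑ l ∈ Finset.piAntidiag (Finset.univ : Finset (Fin m)) k,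
            (Nat.multinomial Finset.univ l : ℝ) * t k :=
          Finset.sum_congr rfl fun l hl => by rw [hF]; simp only; rw [hmem l hl]
      _ = (∑ l ∈ Finset.piAntidiag (Finset.univ : Finset (Fin m)) k,
            (Nat.multinomial Finset.univ l : ℝ)) * t k := by rw [← Finset.sum_mul]
      _ = (m : ℝ) ^ k * t k := by rw [multinomial_piAntidiag_sum]
  have hbound : ∀ s : Finset (Fin m → ℕ), ∑ l ∈ s, F l ≤ ∑' k : ℕ, (m : ℝ) ^ k * t k := by
    intro s
    set N := s.sup (fun l => ∑ j, l j) with hN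
    have hsub : s ⊆ (Finset.range (N + 1)).biUnion
        (fun k => Finset.piAntidiag (Finset.univ : Finset (Fin m)) k) := by
      intro l hl
      refine Finset.mem_biUnion.2 ⟨∑ j, l j,
        Finset.mem_range.2 (Nat.lt_succ_of_le (Finset.le_sup hl)), ?_⟩
      rw [Finset.mem_piAntidiag]
      exact ⟨rfl, fun i _ => Finset.mem_univ i⟩
    have hdisj : (↑(Finset.range (N + 1)) : Set ℕ).PairwiseDisjoint
        (fun k => Finset.piAntidiag (Finset.univ : Finset (Fin m)) k) := by
      intro a _ b _ hab
      refine Finset.disjoint_left.mpr ?_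
      intro l hla hlb
      rw [Finset.mem_piAntidiag] at hla hlb
      exact hab (hla.1 ▸ hlb.1 ▸ rfl)
    calc ∑ l ∈ s, F l
        ≤ ∑ l ∈ (Finset.range (N + 1)).biUnion
            (fun k => Finset.piAntidiag (Finset.univ : Finset (Fin m)) k), F l :=
          Finset.sum_le_sum_of_subset_of_nonneg hsub fun l _ _ => hnn l
      _ = ∑ k ∈ Finset.range (N + 1),
            ∑ l ∈ Finset.piAntidiag (Finset.univ : Finset (Fin m)) k, F l :=
          Finset.sum_biUnion hdisj
      _ = ∑ k ∈ Finset.range (N + 1), (m : ℝ) ^ k * t k :=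
          Finset.sum_congr rfl fun k _ => hgroup k
      _ ≤ ∑' k : ℕ, (m : ℝ) ^ k * t k := Summable.sum_le_tsum _ (fun k _ => hnnN k) hsum
  have hs := summable_of_sum_le hnn hbound
  exact ⟨hs, Summable.tsum_le_of_sum_le hs hbound⟩

lemma series_bound {E : Type*} [NonUnitalNormedCommRing E] {m : ℕ}
    (f : (Fin m → ℕ) → E) (t : ℕ → ℝ) (ht : ∀ k, 0 ≤ t k)
    (hcomp : ∀ l : Fin m → ℕ, ‖f l‖ ≤ (Nat.multinomial Finset.univ l : ℝ) * t (∑ j, l j))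
    (hsum : Summable fun k : ℕ => (m : ℝ) ^ k * t k) :
    Summable (fun l => ‖f l‖) ∧ ∑' l, ‖f l‖ ≤ ∑' k : ℕ, (m : ℝ) ^ k * t k := by
  obtain ⟨hs, hb⟩ := master_summable m t ht hsum
  have h1 : Summable (fun l => ‖f l‖) :=
    Summable.of_nonneg_of_le (fun _ => norm_nonneg _) hcomp hs
  exact ⟨h1, le_trans (Summable.tsum_le_tsum hcomp h1 hs) hb⟩

end Master

set_option maxHeartbeats 3000000 in
/-- the contraction argument of Proposition 4.2 of the paper, in an
abstract commutative non-unital complex Banach algebra. Under the stated bounds on the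
data, `G` maps the ball of radius `c` into itself with absolutely convergent defining
series, is `½`-Lipschitz there, and hence has a unique fixed point `ỹ` with `‖ỹ‖ ≤ c`. -/
theorem convolution_equation_fixed_point
    {E : Type*} [NonUnitalNormedCommRing E] [NormedSpace ℂ E] [CompleteSpace E]
    (m : ℕ) (hm : 1 ≤ m)
    (K L K₁ δ c : ℝ) (hK : 0 < K) (hL : 0 < L) (hK₁ : 0 < K₁) (hδ : 0 < δ)
    (μ : (Fin m → ℕ) → Fin m → ℂ) (w₀ : Fin m → E) (w : (Fin m → ℕ) → Fin m → E)
    (Θ : (Fin m → E) →ₗ[ℂ] (Fin m → E))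
    (hμ : ∀ l : Fin m → ℕ, 2 ≤ ∑ j, l j → ∀ i,
      ‖μ l i‖ ≤ K * (Nat.multinomial Finset.univ l : ℝ) * L ^ (∑ j, l j))
    (hw₀ : ‖w₀‖ ≤ K₁)
    (hw : ∀ l : Fin m → ℕ, 1 ≤ ∑ j, l j →
      ‖w l‖ ≤ K₁ * (Nat.multinomial Finset.univ l : ℝ) * L ^ (∑ j, l j))
    (hΘ : ∀ v : Fin m → E, ‖Θ v‖ ≤ δ * ‖v‖)
    (hδlow : 1 / (10 * m * K * L) ≤ δ)
    (hc : c = 1 / (50 * m ^ 2 * δ * K * L ^ 2))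
    (hK₁c : K₁ ≤ (5 * c * m * L) ^ 2 * K) :
    -- G maps the ball ‖φ‖ ≤ c to itself, with absolutely convergent defining series
    (∀ φ : Fin m → E, ‖φ‖ ≤ c →
      (∀ i, Summable fun l : Fin m → ℕ =>
        ‖if 2 ≤ ∑ j, l j then (μ l i) • mpow φ l else 0‖) ∧
      (∀ i, Summable fun l : Fin m → ℕ =>
        ‖if 1 ≤ ∑ j, l j then (w l i) * mpow φ l else 0‖) ∧
      ‖Gop μ w₀ w Θ φ‖ ≤ c) ∧
    -- G is ½-Lipschitz on the ball
    (∀ φ ψ : Fin m → E, ‖φ‖ ≤ c → ‖ψ‖ ≤ c →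
      ‖Gop μ w₀ w Θ φ - Gop μ w₀ w Θ ψ‖ ≤ (1 / 2) * ‖φ - ψ‖) ∧
    -- unique fixed point in the ball
    (∃! y : Fin m → E, ‖y‖ ≤ c ∧ Gop μ w₀ w Θ y = y) := by
  -- basic positivity and numeric facts
  have hm0 : (0 : ℝ) < m := by exact_mod_cast Nat.lt_of_lt_of_le Nat.zero_lt_one hm
  have hc0 : 0 < c := by
    rw [hc]; positivity
  set y : ℝ := (m : ℝ) * L * c with hy
  have hy0 : 0 < y := by positivity
  have h50 : 50 * (m : ℝ) ^ 2 * δ * K * L ^ 2 * c = 1 := by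
    rw [hc]; field_simp
  have h10 : (1 : ℝ) ≤ δ * (10 * m * K * L) := by
    rw [← div_le_iff₀ (by positivity)] at *
    exact hδlow
  have hy5 : y ≤ 1 / 5 := by
    nlinarith [mul_le_mul_of_nonneg_left h10 (show (0 : ℝ) ≤ (m : ℝ) * L * c by positivity)]
  have hy1 : y < 1 := lt_of_le_of_lt hy5 (by norm_num)
  have h1y : (0 : ℝ) < 1 - y := by linarith
  have h1y' : (4 : ℝ) / 5 ≤ 1 - y := by linarith
  have hinv : (1 - y)⁻¹ ≤ 5 / 4 := by
    rw [inv_le_comm₀ h1y (by norm_num)]; linarith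
  have hinv0 : (0 : ℝ) ≤ (1 - y)⁻¹ := by positivity
  have I1 : δ * K * y ^ 2 = c / 50 := by
    rw [hy]; linear_combination (c / 50) * h50
  have hK₁y : K₁ ≤ 25 * K * y ^ 2 := by
    have : (5 * c * (m : ℝ) * L) ^ 2 * K = 25 * K * y ^ 2 := by rw [hy]; ring
    linarith [hK₁c, this.ge]
  -- Part 1: self-map with absolutely convergent series
  have part1 : ∀ φ : Fin m → E, ‖φ‖ ≤ c →
      (∀ i, Summable fun l : Fin m → ℕ =>
        ‖if 2 ≤ ∑ j, l j then (μ l i) • mpow φ l else 0‖) ∧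
      (∀ i, Summable fun l : Fin m → ℕ =>
        ‖if 1 ≤ ∑ j, l j then (w l i) * mpow φ l else 0‖) ∧
      ‖Gop μ w₀ w Θ φ‖ ≤ c := by
    intro φ hφ
    -- the comparison weights
    set t1 : ℕ → ℝ := fun k => if 2 ≤ k then K * (L * c) ^ k else 0 with ht1def
    set t2 : ℕ → ℝ := fun k => if 1 ≤ k then K₁ * (L * c) ^ k else 0 with ht2def
    have ht1 : ∀ k, 0 ≤ t1 k := by
      intro k; rw [ht1def]; dsimp only; split
      · positivity
      · exact le_rfl
    have ht2 : ∀ k, 0 ≤ t2 k := by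
      intro k; rw [ht2def]; dsimp only; split
      · positivity
      · exact le_rfl
    have hrw1 : (fun k : ℕ => (m : ℝ) ^ k * t1 k)
        = fun k : ℕ => if 2 ≤ k then K * y ^ k else 0 := by
      funext k; rw [ht1def]; dsimp only; split
      · rw [hy]; ring
      · rw [mul_zero]
    have hrw2 : (fun k : ℕ => (m : ℝ) ^ k * t2 k)
        = fun k : ℕ => if 1 ≤ k then K₁ * y ^ k else 0 := by
      funext k; rw [ht2def]; dsimp only; split
      · rw [hy]; ring
      · rw [mul_zero]
    have hsum1 : Summable (fun k : ℕ => (m : ℝ) ^ k * t1 k) := by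
      rw [hrw1]; exact (tail_geom_scaled y K hy0.le hy1 2).1
    have hsum2 : Summable (fun k : ℕ => (m : ℝ) ^ k * t2 k) := by
      rw [hrw2]; exact (tail_geom_scaled y K₁ hy0.le hy1 1).1
    have hval1 : ∑' k : ℕ, (m : ℝ) ^ k * t1 k = K * (y ^ 2 * (1 - y)⁻¹) := by
      rw [hrw1]; exact (tail_geom_scaled y K hy0.le hy1 2).2
    have hval2 : ∑' k : ℕ, (m : ℝ) ^ k * t2 k = K₁ * (y ^ 1 * (1 - y)⁻¹) := by
      rw [hrw2]; exact (tail_geom_scaled y K₁ hy0.le hy1 1).2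
    have hcomp1 : ∀ i, ∀ l : Fin m → ℕ,
        ‖if 2 ≤ ∑ j, l j then (μ l i) • mpow φ l else 0‖
          ≤ (Nat.multinomial Finset.univ l : ℝ) * t1 (∑ j, l j) := by
      intro i l
      rw [ht1def]; dsimp only
      by_cases h2 : 2 ≤ ∑ j, l j
      · rw [if_pos h2, if_pos h2]
        calc ‖(μ l i) • mpow φ l‖ = ‖μ l i‖ * ‖mpow φ l‖ := norm_smul _ _
          _ ≤ (K * (Nat.multinomial Finset.univ l : ℝ) * L ^ (∑ j, l j)) * c ^ (∑ j, l j) :=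
              mul_le_mul (hμ l h2 i) (norm_mpow_le φ l hc0.le hφ) (norm_nonneg _)
                (by positivity)
          _ = (Nat.multinomial Finset.univ l : ℝ) * (K * (L * c) ^ (∑ j, l j)) := by
              rw [mul_pow]; ring
      · rw [if_neg h2, if_neg h2, norm_zero, mul_zero]
    have hcomp2 : ∀ i, ∀ l : Fin m → ℕ,
        ‖if 1 ≤ ∑ j, l j then (w l i) * mpow φ l else 0‖
          ≤ (Nat.multinomial Finset.univ l : ℝ) * t2 (∑ j, l j) := by
      intro i l
      rw [ht2def]; dsimp only
      by_cases h1 : 1 ≤ ∑ j, l j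
      · rw [if_pos h1, if_pos h1]
        calc ‖(w l i) * mpow φ l‖ ≤ ‖w l i‖ * ‖mpow φ l‖ := norm_mul_le _ _
          _ ≤ (K₁ * (Nat.multinomial Finset.univ l : ℝ) * L ^ (∑ j, l j)) * c ^ (∑ j, l j) :=
              mul_le_mul ((norm_le_pi_norm (w l) i).trans (hw l h1))
                (norm_mpow_le φ l hc0.le hφ) (norm_nonneg _) (by positivity)
          _ = (Nat.multinomial Finset.univ l : ℝ) * (K₁ * (L * c) ^ (∑ j, l j)) := by
              rw [mul_pow]; ring
      · rw [if_neg h1, if_neg h1, norm_zero, mul_zero]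
    have H1 : ∀ i, Summable (fun l : Fin m → ℕ =>
          ‖if 2 ≤ ∑ j, l j then (μ l i) • mpow φ l else 0‖)
        ∧ (∑' l : Fin m → ℕ, ‖if 2 ≤ ∑ j, l j then (μ l i) • mpow φ l else 0‖)
            ≤ K * (y ^ 2 * (1 - y)⁻¹) := by
      intro i
      obtain ⟨hs, hb⟩ := series_bound
        (fun l : Fin m → ℕ => if 2 ≤ ∑ j, l j then (μ l i) • mpow φ l else 0)
        t1 ht1 (hcomp1 i) hsum1
      exact ⟨hs, hb.trans_eq hval1⟩
    have H2 : ∀ i, Summable (fun l : Fin m → ℕ =>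
          ‖if 1 ≤ ∑ j, l j then (w l i) * mpow φ l else 0‖)
        ∧ (∑' l : Fin m → ℕ, ‖if 1 ≤ ∑ j, l j then (w l i) * mpow φ l else 0‖)
            ≤ K₁ * (y ^ 1 * (1 - y)⁻¹) := by
      intro i
      obtain ⟨hs, hb⟩ := series_bound
        (fun l : Fin m → ℕ => if 1 ≤ ∑ j, l j then (w l i) * mpow φ l else 0)
        t2 ht2 (hcomp2 i) hsum2
      exact ⟨hs, hb.trans_eq hval2⟩
    refine ⟨fun i => (H1 i).1, fun i => (H2 i).1, ?_⟩
    -- the norm bound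
    set R : ℝ := K * (y ^ 2 * (1 - y)⁻¹) + K₁ + K₁ * (y ^ 1 * (1 - y)⁻¹) with hR
    have hR0 : 0 ≤ R := by
      rw [hR]
      have : (0:ℝ) ≤ K * (y ^ 2 * (1 - y)⁻¹) := by positivity
      have : (0:ℝ) ≤ K₁ * (y ^ 1 * (1 - y)⁻¹) := by positivity
      positivity
    have hvR : ‖(fun i =>
        (∑' l : Fin m → ℕ, if 2 ≤ ∑ j, l j then (μ l i) • mpow φ l else 0) + w₀ i +
          (∑' l : Fin m → ℕ, if 1 ≤ ∑ j, l j then (w l i) * mpow φ l else 0) : Fin m → E)‖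
        ≤ R := by
      rw [pi_norm_le_iff_of_nonneg hR0]
      intro i
      calc ‖(∑' l : Fin m → ℕ, if 2 ≤ ∑ j, l j then (μ l i) • mpow φ l else 0) + w₀ i +
          (∑' l : Fin m → ℕ, if 1 ≤ ∑ j, l j then (w l i) * mpow φ l else 0)‖
          ≤ ‖∑' l : Fin m → ℕ, if 2 ≤ ∑ j, l j then (μ l i) • mpow φ l else 0‖ + ‖w₀ i‖ +
            ‖∑' l : Fin m → ℕ, if 1 ≤ ∑ j, l j then (w l i) * mpow φ l else 0‖ :=
            norm_add₃_le
        _ ≤ K * (y ^ 2 * (1 - y)⁻¹) + K₁ + K₁ * (y ^ 1 * (1 - y)⁻¹) := by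
            gcongr
            · exact (norm_tsum_le_tsum_norm (H1 i).1).trans (H1 i).2
            · exact (norm_le_pi_norm w₀ i).trans hw₀
            · exact (norm_tsum_le_tsum_norm (H2 i).1).trans (H2 i).2
    have hfinal : δ * R ≤ c := by
      have e1 : δ * (K * (y ^ 2 * (1 - y)⁻¹)) ≤ c / 40 := by
        calc δ * (K * (y ^ 2 * (1 - y)⁻¹)) = (δ * K * y ^ 2) * (1 - y)⁻¹ := by ring
          _ ≤ (c / 50) * (5 / 4) := by
              rw [I1]
              exact mul_le_mul_of_nonneg_left hinv (by positivity)
          _ = c / 40 := by ring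
      have e2 : δ * K₁ ≤ c / 2 := by
        calc δ * K₁ ≤ δ * (25 * K * y ^ 2) := mul_le_mul_of_nonneg_left hK₁y hδ.le
          _ = 25 * (δ * K * y ^ 2) := by ring
          _ = c / 2 := by rw [I1]; ring
      have hyinv : y ^ 1 * (1 - y)⁻¹ ≤ 1 / 4 := by
        rw [pow_one]
        calc y * (1 - y)⁻¹ ≤ (1 / 5) * (5 / 4) := mul_le_mul hy5 hinv hinv0 (by norm_num)
          _ = 1 / 4 := by norm_num
      have e3 : δ * (K₁ * (y ^ 1 * (1 - y)⁻¹)) ≤ c / 8 := by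
        calc δ * (K₁ * (y ^ 1 * (1 - y)⁻¹)) ≤ δ * ((25 * K * y ^ 2) * (1 / 4)) := by
              apply mul_le_mul_of_nonneg_left _ hδ.le
              exact mul_le_mul hK₁y hyinv (by positivity) (by positivity)
          _ = (25 / 4) * (δ * K * y ^ 2) := by ring
          _ = c / 8 := by rw [I1]; ring
      rw [hR]
      calc δ * (K * (y ^ 2 * (1 - y)⁻¹) + K₁ + K₁ * (y ^ 1 * (1 - y)⁻¹))
          = δ * (K * (y ^ 2 * (1 - y)⁻¹)) + δ * K₁ + δ * (K₁ * (y ^ 1 * (1 - y)⁻¹)) := by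
            ring
        _ ≤ c / 40 + c / 2 + c / 8 := by linarith
        _ ≤ c := by linarith
    calc ‖Gop μ w₀ w Θ φ‖ = ‖Θ (fun i =>
          (∑' l : Fin m → ℕ, if 2 ≤ ∑ j, l j then (μ l i) • mpow φ l else 0) + w₀ i +
          (∑' l : Fin m → ℕ, if 1 ≤ ∑ j, l j then (w l i) * mpow φ l else 0))‖ := by
          rw [Gop]
      _ ≤ δ * ‖(fun i =>
          (∑' l : Fin m → ℕ, if 2 ≤ ∑ j, l j then (μ l i) • mpow φ l else 0) + w₀ i +
          (∑' l : Fin m → ℕ, if 1 ≤ ∑ j, l j then (w l i) * mpow φ l else 0) : Fin m → E)‖ :=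
          hΘ _
      _ ≤ δ * R := mul_le_mul_of_nonneg_left hvR hδ.le
      _ ≤ c := hfinal
  -- Part 2: Lipschitz
  have part2 : ∀ φ ψ : Fin m → E, ‖φ‖ ≤ c → ‖ψ‖ ≤ c →
      ‖Gop μ w₀ w Θ φ - Gop μ w₀ w Θ ψ‖ ≤ (1 / 2) * ‖φ - ψ‖ := by
    intro φ ψ hφ hψ
    set D : ℝ := ‖φ - ψ‖ with hD
    have hD0 : 0 ≤ D := norm_nonneg _
    -- comparison weights for differences
    set u1 : ℕ → ℝ := fun k => if 2 ≤ k then K * D / c * ((k : ℝ) * (L * c) ^ k) else 0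
      with hu1def
    set u2 : ℕ → ℝ := fun k => if 1 ≤ k then K₁ * D / c * ((k : ℝ) * (L * c) ^ k) else 0
      with hu2def
    have hu1 : ∀ k, 0 ≤ u1 k := by
      intro k; rw [hu1def]; dsimp only; split
      · positivity
      · exact le_rfl
    have hu2 : ∀ k, 0 ≤ u2 k := by
      intro k; rw [hu2def]; dsimp only; split
      · positivity
      · exact le_rfl
    have hrw1 : (fun k : ℕ => (m : ℝ) ^ k * u1 k)
        = fun k : ℕ => if 2 ≤ k then (K * D / c) * ((k : ℝ) * y ^ k) else 0 := by
      funext k; rw [hu1def]; dsimp only; split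
      · rw [hy]; ring
      · rw [mul_zero]
    have hrw2 : (fun k : ℕ => (m : ℝ) ^ k * u2 k)
        = fun k : ℕ => if 1 ≤ k then (K₁ * D / c) * ((k : ℝ) * y ^ k) else 0 := by
      funext k; rw [hu2def]; dsimp only; split
      · rw [hy]; ring
      · rw [mul_zero]
    have hsum1 : Summable (fun k : ℕ => (m : ℝ) ^ k * u1 k) := by
      rw [hrw1]; exact (tail_geom_mul_scaled y (K * D / c) hy0.le hy1 2).1
    have hsum2 : Summable (fun k : ℕ => (m : ℝ) ^ k * u2 k) := by
      rw [hrw2]; exact (tail_geom_mul_scaled y (K₁ * D / c) hy0.le hy1 1).1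
    have hval1 : ∑' k : ℕ, (m : ℝ) ^ k * u1 k
        = (K * D / c) * (y ^ 2 * (y / (1 - y) ^ 2 + ((2 : ℕ) : ℝ) * (1 - y)⁻¹)) := by
      rw [hrw1]; exact (tail_geom_mul_scaled y (K * D / c) hy0.le hy1 2).2
    have hval2 : ∑' k : ℕ, (m : ℝ) ^ k * u2 k
        = (K₁ * D / c) * (y ^ 1 * (y / (1 - y) ^ 2 + ((1 : ℕ) : ℝ) * (1 - y)⁻¹)) := by
      rw [hrw2]; exact (tail_geom_mul_scaled y (K₁ * D / c) hy0.le hy1 1).2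
    -- pointwise comparison for the difference terms
    have hpow : ∀ S : ℕ, 1 ≤ S → c ^ (S - 1) * c = c ^ S := by
      intro S hS
      rw [← pow_succ, Nat.sub_add_cancel hS]
    have hcomp1 : ∀ i, ∀ l : Fin m → ℕ,
        ‖if 2 ≤ ∑ j, l j then (μ l i) • (mpow φ l - mpow ψ l) else 0‖
          ≤ (Nat.multinomial Finset.univ l : ℝ) * u1 (∑ j, l j) := by
      intro i l
      rw [hu1def]; dsimp only
      by_cases h2 : 2 ≤ ∑ j, l j
      · rw [if_pos h2, if_pos h2]
        have hS1 : 1 ≤ ∑ j, l j := le_trans one_le_two h2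
        calc ‖(μ l i) • (mpow φ l - mpow ψ l)‖
            = ‖μ l i‖ * ‖mpow φ l - mpow ψ l‖ := norm_smul _ _
          _ ≤ (K * (Nat.multinomial Finset.univ l : ℝ) * L ^ (∑ j, l j)) *
              ((∑ j, l j) * c ^ ((∑ j, l j) - 1) * D) :=
              mul_le_mul (hμ l h2 i) (norm_mpow_sub_le φ ψ l hc0.le hφ hψ)
                (norm_nonneg _) (by positivity)
          _ = (Nat.multinomial Finset.univ l : ℝ) *
              (K * D / c * ((∑ j, l j) * (L * c) ^ (∑ j, l j))) := by
              rw [mul_pow, ← hpow _ hS1]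
              field_simp
      · rw [if_neg h2, if_neg h2, norm_zero, mul_zero]
    have hcomp2 : ∀ i, ∀ l : Fin m → ℕ,
        ‖if 1 ≤ ∑ j, l j then (w l i) * (mpow φ l - mpow ψ l) else 0‖
          ≤ (Nat.multinomial Finset.univ l : ℝ) * u2 (∑ j, l j) := by
      intro i l
      rw [hu2def]; dsimp only
      by_cases h1 : 1 ≤ ∑ j, l j
      · rw [if_pos h1, if_pos h1]
        calc ‖(w l i) * (mpow φ l - mpow ψ l)‖
            ≤ ‖w l i‖ * ‖mpow φ l - mpow ψ l‖ := norm_mul_le _ _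
          _ ≤ (K₁ * (Nat.multinomial Finset.univ l : ℝ) * L ^ (∑ j, l j)) *
              ((∑ j, l j) * c ^ ((∑ j, l j) - 1) * D) :=
              mul_le_mul ((norm_le_pi_norm (w l) i).trans (hw l h1))
                (norm_mpow_sub_le φ ψ l hc0.le hφ hψ) (norm_nonneg _) (by positivity)
          _ = (Nat.multinomial Finset.univ l : ℝ) *
              (K₁ * D / c * ((∑ j, l j) * (L * c) ^ (∑ j, l j))) := by
              rw [mul_pow, ← hpow _ h1]
              field_simp
      · rw [if_neg h1, if_neg h1, norm_zero, mul_zero]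
    set U1 : ℝ := (K * D / c) * (y ^ 2 * (y / (1 - y) ^ 2 + ((2 : ℕ) : ℝ) * (1 - y)⁻¹))
      with hU1
    set U2 : ℝ := (K₁ * D / c) * (y ^ 1 * (y / (1 - y) ^ 2 + ((1 : ℕ) : ℝ) * (1 - y)⁻¹))
      with hU2
    have HD1 : ∀ i,
        ‖∑' l : Fin m → ℕ, (if 2 ≤ ∑ j, l j then (μ l i) • (mpow φ l - mpow ψ l) else 0)‖
          ≤ U1 := by
      intro i
      obtain ⟨hs, hb⟩ := series_bound
        (fun l : Fin m → ℕ => if 2 ≤ ∑ j, l j then (μ l i) • (mpow φ l - mpow ψ l) else 0)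
        u1 hu1 (hcomp1 i) hsum1
      exact (norm_tsum_le_tsum_norm hs).trans (hb.trans_eq hval1)
    have HD2 : ∀ i,
        ‖∑' l : Fin m → ℕ, (if 1 ≤ ∑ j, l j then (w l i) * (mpow φ l - mpow ψ l) else 0)‖
          ≤ U2 := by
      intro i
      obtain ⟨hs, hb⟩ := series_bound
        (fun l : Fin m → ℕ => if 1 ≤ ∑ j, l j then (w l i) * (mpow φ l - mpow ψ l) else 0)
        u2 hu2 (hcomp2 i) hsum2
      exact (norm_tsum_le_tsum_norm hs).trans (hb.trans_eq hval2)
    -- summability of the vector series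
    have hsφ := part1 φ hφ
    have hsψ := part1 ψ hψ
    have hsum1φ : ∀ i, Summable (fun l : Fin m → ℕ =>
        if 2 ≤ ∑ j, l j then (μ l i) • mpow φ l else 0) :=
      fun i => Summable.of_norm (hsφ.1 i)
    have hsum1ψ : ∀ i, Summable (fun l : Fin m → ℕ =>
        if 2 ≤ ∑ j, l j then (μ l i) • mpow ψ l else 0) :=
      fun i => Summable.of_norm (hsψ.1 i)
    have hsum2φ : ∀ i, Summable (fun l : Fin m → ℕ =>
        if 1 ≤ ∑ j, l j then (w l i) * mpow φ l else 0) :=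
      fun i => Summable.of_norm (hsφ.2.1 i)
    have hsum2ψ : ∀ i, Summable (fun l : Fin m → ℕ =>
        if 1 ≤ ∑ j, l j then (w l i) * mpow ψ l else 0) :=
      fun i => Summable.of_norm (hsψ.2.1 i)
    -- difference of the tsums
    have hdiff1 : ∀ i,
        (∑' l : Fin m → ℕ, if 2 ≤ ∑ j, l j then (μ l i) • mpow φ l else 0) -
        (∑' l : Fin m → ℕ, if 2 ≤ ∑ j, l j then (μ l i) • mpow ψ l else 0)
        = ∑' l : Fin m → ℕ, (if 2 ≤ ∑ j, l j then (μ l i) • (mpow φ l - mpow ψ l) else 0) := by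
      intro i
      rw [← Summable.tsum_sub (hsum1φ i) (hsum1ψ i)]
      exact tsum_congr fun l => by split <;> simp [smul_sub]
    have hdiff2 : ∀ i,
        (∑' l : Fin m → ℕ, if 1 ≤ ∑ j, l j then (w l i) * mpow φ l else 0) -
        (∑' l : Fin m → ℕ, if 1 ≤ ∑ j, l j then (w l i) * mpow ψ l else 0)
        = ∑' l : Fin m → ℕ, (if 1 ≤ ∑ j, l j then (w l i) * (mpow φ l - mpow ψ l) else 0) := by
      intro i
      rw [← Summable.tsum_sub (hsum2φ i) (hsum2ψ i)]
      exact tsum_congr fun l => by split <;> simp [mul_sub]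
    -- nonnegativity of the bounds
    have hpos1 : (0 : ℝ) ≤ y / (1 - y) ^ 2 + ((2 : ℕ) : ℝ) * (1 - y)⁻¹ := by positivity
    have hpos2 : (0 : ℝ) ≤ y / (1 - y) ^ 2 + ((1 : ℕ) : ℝ) * (1 - y)⁻¹ := by positivity
    have hU10 : 0 ≤ U1 := by rw [hU1]; positivity
    have hU20 : 0 ≤ U2 := by rw [hU2]; positivity
    -- norm of the difference of the inner vectors
    set vφ : Fin m → E := fun i =>
      (∑' l : Fin m → ℕ, if 2 ≤ ∑ j, l j then (μ l i) • mpow φ l else 0) + w₀ i +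
        (∑' l : Fin m → ℕ, if 1 ≤ ∑ j, l j then (w l i) * mpow φ l else 0) with hvφ
    set vψ : Fin m → E := fun i =>
      (∑' l : Fin m → ℕ, if 2 ≤ ∑ j, l j then (μ l i) • mpow ψ l else 0) + w₀ i +
        (∑' l : Fin m → ℕ, if 1 ≤ ∑ j, l j then (w l i) * mpow ψ l else 0) with hvψ
    have hvdiff : ‖vφ - vψ‖ ≤ U1 + U2 := by
      rw [pi_norm_le_iff_of_nonneg (by linarith)]
      intro i
      have hco : (vφ - vψ) i =
          (∑' l : Fin m → ℕ, (if 2 ≤ ∑ j, l j then (μ l i) • (mpow φ l - mpow ψ l) else 0)) +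
          (∑' l : Fin m → ℕ, (if 1 ≤ ∑ j, l j then (w l i) * (mpow φ l - mpow ψ l) else 0)) := by
        rw [Pi.sub_apply, hvφ, hvψ]
        dsimp only
        rw [← hdiff1 i, ← hdiff2 i]
        abel
      rw [hco]
      exact (norm_add_le _ _).trans (add_le_add (HD1 i) (HD2 i))
    -- numeric endgame
    have hIc : δ * K * y ^ 2 / c = 1 / 50 := by
      rw [I1, div_right_comm, div_self hc0.ne']
    have hA : y / (1 - y) ^ 2 + ((2 : ℕ) : ℝ) * (1 - y)⁻¹ ≤ 45 / 16 := by
      have hsq : y / (1 - y) ^ 2 ≤ (1 / 5) * (5 / 4) ^ 2 := by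
        rw [div_eq_mul_inv, ← inv_pow]
        exact mul_le_mul hy5 (pow_le_pow_left₀ (by positivity) hinv 2) (by positivity)
          (by norm_num)
      have hcast : ((2 : ℕ) : ℝ) = 2 := by norm_num
      rw [hcast]
      nlinarith [hinv]
    have hB : y / (1 - y) ^ 2 + ((1 : ℕ) : ℝ) * (1 - y)⁻¹ ≤ 45 / 16 := by
      have hsq : y / (1 - y) ^ 2 ≤ (1 / 5) * (5 / 4) ^ 2 := by
        rw [div_eq_mul_inv, ← inv_pow]
        exact mul_le_mul hy5 (pow_le_pow_left₀ (by positivity) hinv 2) (by positivity)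
          (by norm_num)
      have hcast : ((1 : ℕ) : ℝ) = 1 := by norm_num
      rw [hcast]
      nlinarith [hinv]
    have b1 : δ * U1 ≤ (45 / 800) * D := by
      have step : U1 ≤ (K * D / c) * (y ^ 2 * (45 / 16)) := by
        rw [hU1]
        exact mul_le_mul_of_nonneg_left
          (mul_le_mul_of_nonneg_left hA (by positivity)) (by positivity)
      calc δ * U1 ≤ δ * ((K * D / c) * (y ^ 2 * (45 / 16))) :=
            mul_le_mul_of_nonneg_left step hδ.le
        _ = (45 / 16) * (δ * K * y ^ 2 / c) * D := by ring
        _ = (45 / 800) * D := by rw [hIc]; ring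
    have b2 : δ * U2 ≤ (225 / 800) * D := by
      have step : U2 ≤ (K₁ * D / c) * (y * (45 / 16)) := by
        rw [hU2, pow_one]
        exact mul_le_mul_of_nonneg_left
          (mul_le_mul_of_nonneg_left hB (by positivity)) (by positivity)
      have hK₁yy : δ * (K₁ * y) ≤ 5 * (δ * K * y ^ 2) := by
        have : K₁ * y ≤ (25 * K * y ^ 2) * (1 / 5) :=
          mul_le_mul hK₁y hy5 hy0.le (by positivity)
        nlinarith [hδ.le]
      calc δ * U2 ≤ δ * ((K₁ * D / c) * (y * (45 / 16))) :=
            mul_le_mul_of_nonneg_left step hδ.le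
        _ = (45 / 16) * (δ * (K₁ * y)) * (D / c) := by ring
        _ ≤ (45 / 16) * (5 * (δ * K * y ^ 2)) * (D / c) := by
            apply mul_le_mul_of_nonneg_right _ (by positivity)
            exact mul_le_mul_of_nonneg_left hK₁yy (by norm_num)
        _ = (225 / 16) * (δ * K * y ^ 2 / c) * D := by ring
        _ = (225 / 800) * D := by rw [hIc]; ring
    -- conclude
    have hGdiff : Gop μ w₀ w Θ φ - Gop μ w₀ w Θ ψ = Θ (vφ - vψ) := by
      rw [Gop, Gop, ← map_sub]
    calc ‖Gop μ w₀ w Θ φ - Gop μ w₀ w Θ ψ‖ = ‖Θ (vφ - vψ)‖ := by rw [hGdiff]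
      _ ≤ δ * ‖vφ - vψ‖ := hΘ _
      _ ≤ δ * (U1 + U2) := mul_le_mul_of_nonneg_left hvdiff hδ.le
      _ = δ * U1 + δ * U2 := by ring
      _ ≤ (45 / 800) * D + (225 / 800) * D := add_le_add b1 b2
      _ ≤ (1 / 2) * D := by linarith
  refine ⟨part1, part2, ?_⟩
  -- Part 3: unique fixed point via the Banach contraction principle on the ball
  have hball : IsClosed {z : Fin m → E | ‖z‖ ≤ c} :=
    isClosed_le continuous_norm continuous_const
  haveI : CompleteSpace {z : Fin m → E // ‖z‖ ≤ c} := hball.completeSpace_coe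
  haveI : Nonempty {z : Fin m → E // ‖z‖ ≤ c} := ⟨⟨0, by simp [hc0.le]⟩⟩
  set f : {z : Fin m → E // ‖z‖ ≤ c} → {z : Fin m → E // ‖z‖ ≤ c} :=
    fun z => ⟨Gop μ w₀ w Θ z.1, (part1 z.1 z.2).2.2⟩ with hfdef
  have hcontr : ContractingWith (1 / 2 : NNReal) f := by
    constructor
    · rw [show ((1 : NNReal) / 2) = (2 : NNReal)⁻¹ by norm_num]
      rw [NNReal.inv_lt_one_iff] <;> norm_num
    · rw [lipschitzWith_iff_dist_le_mul]
      intro a b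
      have h2 := part2 a.1 b.1 a.2 b.2
      calc dist (f a) (f b) = ‖Gop μ w₀ w Θ a.1 - Gop μ w₀ w Θ b.1‖ := by
            rw [Subtype.dist_eq, dist_eq_norm]
        _ ≤ (1 / 2) * ‖a.1 - b.1‖ := h2
        _ = ((1 / 2 : NNReal) : ℝ) * dist a b := by
            rw [Subtype.dist_eq, dist_eq_norm]
            norm_num
  set z := ContractingWith.fixedPoint f hcontr with hz
  have hzfix : Gop μ w₀ w Θ z.1 = z.1 := congrArg Subtype.val hcontr.fixedPoint_isFixedPt
  refine ⟨z.1, ⟨z.2, hzfix⟩, ?_⟩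
  rintro z' ⟨hz', hGz'⟩
  have h := part2 z' z.1 hz' z.2
  rw [hGz', hzfix] at h
  have hnorm : ‖z' - z.1‖ = 0 := by
    have := norm_nonneg (z' - z.1)
    linarith
  have := sub_eq_zero.mp (norm_eq_zero.mp hnorm)
  exact this
end
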